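/- arXiv:2301.07229 — 9 statements merged into one kernel-verified Lean document; each statement's English description precedes it below -/
import Mathlib

section
/- Let X₁,…,Xₙ (n ≥ 2) be real-valued random variables on a common probability space, each with finite second moment, with means μᵢ = E[Xᵢ], standard deviations σᵢ = √Var(Xᵢ), and correlations ρ_{i,j} = Corr(Xᵢ, Xⱼ) (assuming σᵢ > 0 for all i). Then the Gini mean difference satisfies GMDₙ ≤ (1/C(n,2)) Σ_{1≤i<j≤n} [ √((σᵢ − σⱼρ_{i,j})² + σⱼ²(1 − ρ_{i,j}²)) + |μᵢ − μⱼ| ]. -/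
open MeasureTheory ProbabilityTheory Real

lemma integral_abs_le_sqrt_integral_sq
    {Ω : Type*} [MeasurableSpace Ω] (P : Measure Ω) [IsProbabilityMeasure P]
    {Z : Ω → ℝ} (hZ : MemLp Z 2 P) :
    ∫ ω, |Z ω| ∂P ≤ Real.sqrt (∫ ω, (Z ω) ^ 2 ∂P) := by
  have hpq : (2 : ℝ).HolderConjugate 2 := Real.HolderConjugate.two_two
  have h2 : ENNReal.ofReal (2 : ℝ) = 2 := by
    simp [ENNReal.ofReal_ofNat]
  have habs : MemLp (fun ω => |Z ω|) (ENNReal.ofReal (2:ℝ)) P := by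
    rw [h2]; simpa [Real.norm_eq_abs] using hZ.norm
  have hone : MemLp (fun _ : Ω => (1 : ℝ)) (ENNReal.ofReal (2:ℝ)) P := by
    rw [h2]; exact memLp_const 1
  have h := integral_mul_le_Lp_mul_Lq_of_nonneg hpq
    (f := fun ω => |Z ω|) (g := fun _ => (1:ℝ))
    (Filter.Eventually.of_forall fun ω => abs_nonneg _)
    (Filter.Eventually.of_forall fun _ => zero_le_one) habs hone
  simp only [mul_one, one_rpow] at h
  have h1 : ∫ (_ : Ω), (1:ℝ) ∂P = 1 := by simp
  rw [h1, Real.one_rpow, mul_one] at h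
  calc ∫ ω, |Z ω| ∂P ≤ (∫ ω, |Z ω| ^ (2:ℝ) ∂P) ^ (1/2 : ℝ) := h
    _ = Real.sqrt (∫ ω, (Z ω) ^ 2 ∂P) := by
        rw [Real.sqrt_eq_rpow]
        congr 1
        refine integral_congr_ae (Filter.Eventually.of_forall fun ω => ?_)
        simp [Real.rpow_two, Real.rpow_natCast, sq_abs]

lemma integral_abs_le_sqrt_variance_add
    {Ω : Type*} [MeasurableSpace Ω] (P : Measure Ω) [IsProbabilityMeasure P]
    {Z : Ω → ℝ} (hZ : MemLp Z 2 P) :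
    ∫ ω, |Z ω| ∂P ≤ Real.sqrt (variance Z P) + |∫ ω, Z ω ∂P| := by
  set m : ℝ := ∫ ω, Z ω ∂P with hm
  have hZm : MemLp (fun ω => Z ω - m) 2 P := hZ.sub (memLp_const m)
  have hint : Integrable (fun ω => |Z ω - m|) P :=
    (hZm.integrable one_le_two).abs
  have step1 : ∫ ω, |Z ω| ∂P ≤ ∫ ω, (|Z ω - m| + |m|) ∂P := by
    refine integral_mono ((hZ.integrable one_le_two).abs) (hint.add (integrable_const _))
      fun ω => ?_
    calc |Z ω| = |(Z ω - m) + m| := by ring_nf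
      _ ≤ |Z ω - m| + |m| := abs_add_le _ _
  have step2 : ∫ ω, (|Z ω - m| + |m|) ∂P = (∫ ω, |Z ω - m| ∂P) + |m| := by
    rw [integral_add hint (integrable_const _)]
    simp
  have step3 : ∫ ω, |Z ω - m| ∂P ≤ Real.sqrt (∫ ω, (Z ω - m) ^ 2 ∂P) :=
    integral_abs_le_sqrt_integral_sq P hZm
  have hvar : variance Z P = ∫ ω, (Z ω - m) ^ 2 ∂P := by
    rw [variance_eq_integral hZ.1.aemeasurable]
  rw [hvar]
  linarith [step1, step2.le, step3]

/-- Upper bound for the Gini mean difference in terms of means, standard deviations and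
correlations (Theorem 1 of the paper). -/
theorem gmd_upper_bound
    {Ω : Type*} [MeasurableSpace Ω] (P : Measure Ω) [IsProbabilityMeasure P]
    (n : ℕ) (hn : 2 ≤ n) (X : Fin n → Ω → ℝ)
    (hmeas : ∀ i, AEMeasurable (X i) P)
    (hL2 : ∀ i, MemLp (X i) 2 P)
    (μ : Fin n → ℝ) (hμ : ∀ i, μ i = ∫ ω, X i ω ∂P)
    (σ : Fin n → ℝ) (hσ : ∀ i, σ i = Real.sqrt (variance (X i) P))
    (hσpos : ∀ i, 0 < σ i)
    (ρ : Fin n → Fin n → ℝ)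
    (hρ : ∀ i j, ρ i j = (∫ ω, (X i ω - μ i) * (X j ω - μ j) ∂P) / (σ i * σ j)) :
    (1 / (n.choose 2 : ℝ)) *
        ∑ i : Fin n, ∑ j : Fin n, (if i < j then ∫ ω, |X i ω - X j ω| ∂P else 0)
      ≤ (1 / (n.choose 2 : ℝ)) *
        ∑ i : Fin n, ∑ j : Fin n,
          (if i < j then
            Real.sqrt ((σ i - σ j * ρ i j) ^ 2 + (σ j) ^ 2 * (1 - (ρ i j) ^ 2))
              + |μ i - μ j|
          else 0) := by
  have hchoose : (0:ℝ) ≤ 1 / (n.choose 2 : ℝ) := by positivity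
  refine mul_le_mul_of_nonneg_left ?_ hchoose
  refine Finset.sum_le_sum fun i _ => Finset.sum_le_sum fun j _ => ?_
  by_cases hij : i < j
  · simp only [hij, if_true]
    -- key term bound
    set Z : Ω → ℝ := fun ω => X i ω - X j ω with hZdef
    have hZ : MemLp Z 2 P := (hL2 i).sub (hL2 j)
    have hinti : Integrable (X i) P := (hL2 i).integrable one_le_two
    have hintj : Integrable (X j) P := (hL2 j).integrable one_le_two
    have hEZ : ∫ ω, Z ω ∂P = μ i - μ j := by
      rw [hZdef, integral_sub hinti hintj, hμ i, hμ j]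
    have key := integral_abs_le_sqrt_variance_add P hZ
    rw [hEZ] at key
    -- compute the variance of Z
    have hσi2 : σ i ^ 2 = variance (X i) P := by
      rw [hσ i, Real.sq_sqrt (variance_nonneg _ _)]
    have hσj2 : σ j ^ 2 = variance (X j) P := by
      rw [hσ j, Real.sq_sqrt (variance_nonneg _ _)]
    have h0 : σ i * σ j ≠ 0 := mul_ne_zero (hσpos i).ne' (hσpos j).ne'
    have hcov : ∫ ω, (X i ω - μ i) * (X j ω - μ j) ∂P = ρ i j * (σ i * σ j) := by
      rw [hρ i j, div_mul_cancel₀ _ h0]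
    have hXiμ : MemLp (fun ω => X i ω - μ i) 2 P := (hL2 i).sub (memLp_const _)
    have hXjμ : MemLp (fun ω => X j ω - μ j) 2 P := (hL2 j).sub (memLp_const _)
    have hi2 : Integrable (fun ω => (X i ω - μ i) ^ 2) P := hXiμ.integrable_sq
    have hj2 : Integrable (fun ω => (X j ω - μ j) ^ 2) P := hXjμ.integrable_sq
    have hijint : Integrable (fun ω => (X i ω - μ i) * (X j ω - μ j)) P := by
      have := hXjμ.smul (𝕜 := ℝ) hXiμ (p := 2) (q := 2) (r := 1)
      exact memLp_one_iff_integrable.mp this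
    have hvari : ∫ ω, (X i ω - μ i) ^ 2 ∂P = variance (X i) P := by
      rw [variance_eq_integral (hL2 i).1.aemeasurable, ← hμ i]
    have hvarj : ∫ ω, (X j ω - μ j) ^ 2 ∂P = variance (X j) P := by
      rw [variance_eq_integral (hL2 j).1.aemeasurable, ← hμ j]
    have hvarZ : variance Z P =
        (σ i - σ j * ρ i j) ^ 2 + σ j ^ 2 * (1 - ρ i j ^ 2) := by
      have h1 : variance Z P = ∫ ω, (Z ω - (μ i - μ j)) ^ 2 ∂P := by
        rw [variance_eq_integral hZ.1.aemeasurable, hEZ]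
      have h2 : ∀ ω, (Z ω - (μ i - μ j)) ^ 2 =
          (X i ω - μ i) ^ 2 + (X j ω - μ j) ^ 2
            - 2 * ((X i ω - μ i) * (X j ω - μ j)) := by
        intro ω; simp only [hZdef]; ring
      have h3 : ∫ ω, (Z ω - (μ i - μ j)) ^ 2 ∂P =
          (∫ ω, (X i ω - μ i) ^ 2 ∂P) + (∫ ω, (X j ω - μ j) ^ 2 ∂P)
            - 2 * ∫ ω, (X i ω - μ i) * (X j ω - μ j) ∂P := by
        simp_rw [h2]
        rw [integral_sub (by exact hi2.add hj2) (by exact hijint.const_mul 2),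
          integral_add hi2 hj2, integral_const_mul]
      rw [h1, h3, hvari, hvarj, ← hσi2, ← hσj2, hcov]
      ring
    rw [hvarZ] at key
    exact key
  · simp [hij]
end

section
/- Let X₁ and X₂ be independent and identically distributed real-valued random variables with mean μ₁ and finite variance σ₁² > 0, and let p > 1 be such that the standardized variable Z₁ = (X₁ − μ₁)/σ₁ satisfies E[|Z₁|^p] < ∞. Then E[|X₁ − X₂|] ≤ C_p · σ₁, where C_p = 2 · (E[|Z₁|^p])^{1/p} · ((p−1)/(2p−1))^{(p−1)/p}. -/
open MeasureTheory ProbabilityTheory Real Set Filter Topology intervalIntegral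

namespace CpAux

/-- The uniform measure on `(0,1)`. -/
noncomputable def mm : Measure ℝ := volume.restrict (Ioo (0:ℝ) 1)

instance : IsProbabilityMeasure mm :=
  ⟨by rw [mm, Measure.restrict_apply_univ, Real.volume_Ioo]; norm_num⟩

lemma ae_mem_mm : ∀ᵐ u ∂mm, u ∈ Ioo (0:ℝ) 1 := ae_restrict_mem measurableSet_Ioo

/-- Quantile function of a real measure. -/
noncomputable def Q (ν : Measure ℝ) (u : ℝ) : ℝ := sInf {x | u ≤ cdf ν x}

variable {ν : Measure ℝ} [IsProbabilityMeasure ν] {u x : ℝ}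

omit [IsProbabilityMeasure ν] in
lemma S_nonempty (h1 : u < 1) : {x | u ≤ cdf ν x}.Nonempty := by
  have h := (tendsto_cdf_atTop ν).eventually (eventually_ge_nhds h1)
  rcases h.exists with ⟨x, hx⟩
  exact ⟨x, hx⟩

omit [IsProbabilityMeasure ν] in
lemma S_bddBelow (h0 : 0 < u) : BddBelow {x | u ≤ cdf ν x} := by
  have h := (tendsto_cdf_atBot ν).eventually (eventually_lt_nhds h0)
  rcases h.exists with ⟨x₀, hx₀⟩
  refine ⟨x₀, fun y hy => ?_⟩
  by_contra hxy
  push_neg at hxy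
  exact absurd (le_trans hy (monotone_cdf ν hxy.le)) (not_le.mpr hx₀)

omit [IsProbabilityMeasure ν] in
lemma le_cdf_Q (h1 : u < 1) : u ≤ cdf ν (Q ν u) := by
  have htd : Tendsto (cdf ν) (𝓝[>] (Q ν u)) (𝓝 (cdf ν (Q ν u))) :=
    ((cdf ν).right_continuous _).tendsto.mono_left (nhdsWithin_mono _ Ioi_subset_Ici_self)
  refine ge_of_tendsto htd ?_
  filter_upwards [self_mem_nhdsWithin] with y hy
  obtain ⟨s, hs, hsy⟩ := exists_lt_of_csInf_lt (S_nonempty h1) hy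
  exact le_trans hs (monotone_cdf ν hsy.le)

omit [IsProbabilityMeasure ν] in
lemma Q_le_iff (h0 : 0 < u) (h1 : u < 1) : Q ν u ≤ x ↔ u ≤ cdf ν x := by
  constructor
  · intro h
    exact le_trans (le_cdf_Q h1) (monotone_cdf ν h)
  · intro h
    exact csInf_le (S_bddBelow h0) h

omit [IsProbabilityMeasure ν] in
lemma Q_monotoneOn : MonotoneOn (Q ν) (Ioo (0:ℝ) 1) := by
  intro a ha b hb hab
  exact csInf_le_csInf (S_bddBelow ha.1) (S_nonempty hb.2) fun x hx => le_trans hab hx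

omit [IsProbabilityMeasure ν] in
lemma Q_aemeasurable : AEMeasurable (Q ν) mm :=
  aemeasurable_restrict_of_monotoneOn measurableSet_Ioo Q_monotoneOn

lemma map_Q : mm.map (Q ν) = ν := by
  refine Measure.ext_of_Iic _ _ (fun x => ?_)
  rw [Measure.map_apply_of_aemeasurable Q_aemeasurable measurableSet_Iic, mm,
    Measure.restrict_apply' measurableSet_Ioo]
  have hset : Q ν ⁻¹' Iic x ∩ Ioo 0 1 = Iic (cdf ν x) ∩ Ioo 0 1 := by
    ext u
    simp only [mem_inter_iff, mem_preimage, mem_Iic, mem_Ioo, and_congr_left_iff]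
    intro hu
    rw [Q_le_iff hu.1 hu.2]
  rw [hset, ← ofReal_cdf ν x]
  rcases lt_or_ge (cdf ν x) 1 with hlt | hge
  · have : Iic (cdf ν x) ∩ Ioo (0:ℝ) 1 = Ioc 0 (cdf ν x) := by
      ext u
      simp only [mem_inter_iff, mem_Iic, mem_Ioo, mem_Ioc]
      constructor
      · rintro ⟨h1, h2, h3⟩; exact ⟨h2, h1⟩
      · rintro ⟨h1, h2⟩; exact ⟨h2, h1, lt_of_le_of_lt h2 hlt⟩
    rw [this, Real.volume_Ioc, sub_zero]
  · have hx1 : cdf ν x = 1 := le_antisymm (cdf_le_one ν x) hge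
    have : Iic (cdf ν x) ∩ Ioo (0:ℝ) 1 = Ioo 0 1 := by
      rw [hx1]
      exact inter_eq_self_of_subset_right (fun u hu => le_of_lt hu.2)
    rw [this, Real.volume_Ioo, hx1]
    norm_num

/-! Elementary integrals over `(0,1)`. -/

lemma integral_two_mul_sub_one : ∫ u, (2*u - 1) ∂mm = 0 := by
  rw [mm, ← integral_Ioc_eq_integral_Ioo,
    ← intervalIntegral.integral_of_le (by norm_num : (0:ℝ) ≤ 1)]
  have h1 : IntervalIntegrable (fun u : ℝ => 2*u) volume 0 1 :=
    (continuous_const.mul continuous_id).intervalIntegrable _ _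
  have h2 : IntervalIntegrable (fun _ : ℝ => (1:ℝ)) volume 0 1 :=
    continuous_const.intervalIntegrable _ _
  rw [intervalIntegral.integral_sub h1 h2, intervalIntegral.integral_const_mul, integral_id,
    intervalIntegral.integral_const]
  norm_num

lemma continuous_abs_rpow {q : ℝ} (hq : 0 < q) : Continuous (fun u : ℝ => |2*u - 1| ^ q) := by
  rw [continuous_iff_continuousAt]
  intro u
  exact (Real.continuousAt_rpow_const _ _ (Or.inr hq.le)).comp
    ((continuous_const.mul continuous_id).sub continuous_const).abs.continuousAt

lemma integral_abs_rpow {q : ℝ} (hq : 0 < q) :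
    ∫ u, |2*u - 1| ^ q ∂mm = 1/(q+1) := by
  have hc := continuous_abs_rpow hq
  have hint : ∀ a b : ℝ, IntervalIntegrable (fun u : ℝ => |2*u - 1| ^ q) volume a b :=
    fun a b => hc.intervalIntegrable a b
  have hq1 : q + 1 ≠ 0 := by positivity
  have hrpow : ∫ t in (0:ℝ)..1, t ^ q = 1/(q+1) := by
    rw [integral_rpow (Or.inl (by linarith))]
    rw [Real.one_rpow, Real.zero_rpow hq1]
    norm_num
  rw [mm, ← integral_Ioc_eq_integral_Ioo,
    ← intervalIntegral.integral_of_le (by norm_num : (0:ℝ) ≤ 1),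
    ← intervalIntegral.integral_add_adjacent_intervals (hint 0 (1/2)) (hint (1/2) 1)]
  have hL : ∫ u in (0:ℝ)..(1/2), |2*u - 1| ^ q = 1/(2*(q+1)) := by
    have hcong : ∫ u in (0:ℝ)..(1/2), |2*u - 1| ^ q
        = ∫ u in (0:ℝ)..(1/2), (fun t => t ^ q) (1 - 2*u) := by
      refine intervalIntegral.integral_congr (fun u hu => ?_)
      rw [uIcc_of_le (by norm_num : (0:ℝ) ≤ 1/2)] at hu
      have : |2*u - 1| = 1 - 2*u := by
        rw [abs_of_nonpos (by nlinarith [hu.1, hu.2])]; ring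
      simp [this]
    rw [hcong]
    have := mul_integral_comp_sub_mul (f := fun t : ℝ => t ^ q) (c := 2) (d := 1)
      (a := 0) (b := 1/2)
    norm_num at this
    rw [hrpow] at this
    rw [show (1:ℝ)/(2*(q+1)) = (1/(q+1))/2 from by field_simp]
    linarith
  have hR : ∫ u in (1/2:ℝ)..1, |2*u - 1| ^ q = 1/(2*(q+1)) := by
    have hcong : ∫ u in (1/2:ℝ)..1, |2*u - 1| ^ q
        = ∫ u in (1/2:ℝ)..1, (fun t => t ^ q) (2*u - 1) := by
      refine intervalIntegral.integral_congr (fun u hu => ?_)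
      rw [uIcc_of_le (by norm_num : (1/2:ℝ) ≤ 1)] at hu
      have : |2*u - 1| = 2*u - 1 := abs_of_nonneg (by nlinarith [hu.1, hu.2])
      simp [this]
    rw [hcong]
    have := mul_integral_comp_mul_sub (f := fun t : ℝ => t ^ q) (c := 2) (d := 1)
      (a := 1/2) (b := 1)
    norm_num at this
    rw [hrpow] at this
    rw [show (1:ℝ)/(2*(q+1)) = (1/(q+1))/2 from by field_simp]
    linarith
  rw [hL, hR]
  rw [show (1:ℝ)/(2*(q+1)) = (1/(q+1))/2 from by field_simp]
  ring

/-! The sign kernel. -/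

noncomputable def e (u v : ℝ) : ℝ := if v < u then 1 else -1

lemma e_meas2 : Measurable (fun z : ℝ × ℝ => e z.1 z.2) :=
  Measurable.ite (measurableSet_lt measurable_snd measurable_fst) measurable_const
    measurable_const

lemma e_meas_right (u : ℝ) : Measurable (fun v => e u v) :=
  Measurable.ite (measurableSet_lt measurable_id measurable_const) measurable_const
    measurable_const

lemma e_meas_left (v : ℝ) : Measurable (fun u => e u v) :=
  Measurable.ite (measurableSet_lt measurable_const measurable_id) measurable_const
    measurable_const

lemma e_norm_le (u v : ℝ) : ‖e u v‖ ≤ 1 := by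
  rw [e]; split <;> simp

lemma integral_e_right {u : ℝ} (hu : u ∈ Ioo (0:ℝ) 1) : ∫ v, e u v ∂mm = 2*u - 1 := by
  have he : (fun v => e u v) = fun v => (Iio u).indicator (fun _ => (2:ℝ)) v + (-1) := by
    funext v
    by_cases h : v < u
    · rw [e, if_pos h, Set.indicator_of_mem (mem_Iio.mpr h)]; norm_num
    · rw [e, if_neg h, Set.indicator_of_notMem (fun hc => h (mem_Iio.mp hc))]; norm_num
  rw [he, integral_add ((integrable_const (2:ℝ)).indicator measurableSet_Iio)
    (integrable_const _)]
  rw [integral_indicator_const _ measurableSet_Iio, MeasureTheory.integral_const]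
  have h1 : mm (Iio u) = ENNReal.ofReal u := by
    rw [mm, Measure.restrict_apply measurableSet_Iio]
    have : Iio u ∩ Ioo 0 1 = Ioo 0 u := by
      ext v
      simp only [mem_inter_iff, mem_Iio, mem_Ioo]
      exact ⟨fun ⟨a, b, _⟩ => ⟨b, a⟩, fun ⟨a, b⟩ => ⟨b, a, lt_trans b hu.2⟩⟩
    rw [this, Real.volume_Ioo, sub_zero]
  rw [measureReal_def, measureReal_def, h1, measure_univ, ENNReal.toReal_ofReal hu.1.le]
  simp only [smul_eq_mul, ENNReal.toReal_one]
  ring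

lemma integral_e_left {v : ℝ} (hv : v ∈ Ioo (0:ℝ) 1) : ∫ u, e u v ∂mm = 1 - 2*v := by
  have he : (fun u => e u v) = fun u => (Ioi v).indicator (fun _ => (2:ℝ)) u + (-1) := by
    funext u
    by_cases h : v < u
    · rw [e, if_pos h, Set.indicator_of_mem (mem_Ioi.mpr h)]; norm_num
    · rw [e, if_neg h, Set.indicator_of_notMem (fun hc => h (mem_Ioi.mp hc))]; norm_num
  rw [he, integral_add ((integrable_const (2:ℝ)).indicator measurableSet_Ioi)
    (integrable_const _)]
  rw [integral_indicator_const _ measurableSet_Ioi, MeasureTheory.integral_const]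
  have h1 : mm (Ioi v) = ENNReal.ofReal (1 - v) := by
    rw [mm, Measure.restrict_apply measurableSet_Ioi]
    have : Ioi v ∩ Ioo 0 1 = Ioo v 1 := by
      ext u
      simp only [mem_inter_iff, mem_Ioi, mem_Ioo]
      exact ⟨fun ⟨a, _, b⟩ => ⟨a, b⟩, fun ⟨a, b⟩ => ⟨a, lt_trans hv.1 a, b⟩⟩
    rw [this, Real.volume_Ioo]
  rw [measureReal_def, measureReal_def, h1, measure_univ, ENNReal.toReal_ofReal (by linarith [hv.2])]
  simp only [smul_eq_mul, ENNReal.toReal_one]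
  ring

end CpAux

open CpAux

/-- For i.i.d. random variables `X₁, X₂` with mean `μ₁`, standard deviation `σ₁ > 0`, and
standardized variable `Z₁ = (X₁ − μ₁)/σ₁` having finite `p`-th absolute moment (`p > 1`),
`E|X₁ − X₂| ≤ C_p σ₁` with `C_p = 2 ‖Z₁‖_p ((p−1)/(2p−1))^((p−1)/p)`. -/
theorem abs_diff_expectation_le_Cp
    {Ω : Type*} [MeasurableSpace Ω] (P : Measure Ω) [IsProbabilityMeasure P]
    (X₁ X₂ : Ω → ℝ) (hm₁ : Measurable X₁) (hm₂ : Measurable X₂)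
    (hid : P.map X₁ = P.map X₂) (hind : IndepFun X₁ X₂ P)
    (hL2 : MemLp X₁ 2 P)
    (μ₁ σ₁ : ℝ) (hμ₁ : μ₁ = ∫ ω, X₁ ω ∂P)
    (hσ₁ : σ₁ = Real.sqrt (variance X₁ P)) (hσ₁pos : 0 < σ₁)
    (p : ℝ) (hp : 1 < p)
    (hLp : MemLp (fun ω => (X₁ ω - μ₁) / σ₁) (ENNReal.ofReal p) P) :
    ∫ ω, |X₁ ω - X₂ ω| ∂P
      ≤ (2 * (∫ ω, |(X₁ ω - μ₁) / σ₁| ^ p ∂P) ^ (1 / p)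
          * ((p - 1) / (2 * p - 1)) ^ ((p - 1) / p)) * σ₁ := by
  have hp0 : (0:ℝ) < p := lt_trans one_pos hp
  have hp1 : p - 1 ≠ 0 := ne_of_gt (by linarith)
  set q : ℝ := p / (p - 1) with hq_def
  have hq0 : 0 < q := div_pos hp0 (by linarith)
  have hpq : p.HolderConjugate q := Real.holderConjugate_iff.mpr ⟨hp, by rw [hq_def, inv_div]; field_simp; ring⟩
  set ν : Measure ℝ := P.map X₁ with hν_def
  haveI : IsProbabilityMeasure ν := Measure.isProbabilityMeasure_map hm₁.aemeasurable
  set QQ : ℝ → ℝ := Q ν with hQQ_def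
  have hQae : AEMeasurable QQ mm := Q_aemeasurable
  have hmapQ : mm.map QQ = ν := map_Q
  -- basic integrability
  have hX1i : Integrable X₁ P := hL2.integrable (by norm_num)
  have hX2i : Integrable X₂ P := by
    have h1 : Integrable (id : ℝ → ℝ) (P.map X₂) := by
      rw [← hid]
      exact (integrable_map_measure aestronglyMeasurable_id hm₁.aemeasurable).mpr hX1i
    exact (integrable_map_measure aestronglyMeasurable_id hm₂.aemeasurable).mp h1
  have hQint : Integrable QQ mm := by
    have h1 : Integrable (id : ℝ → ℝ) ν :=
      (integrable_map_measure aestronglyMeasurable_id hm₁.aemeasurable).mpr hX1i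
    rw [← hmapQ] at h1
    exact (integrable_map_measure aestronglyMeasurable_id hQae).mp h1
  -- ℒp membership of QQ - μ₁
  have hXmem : MemLp (fun ω => X₁ ω - μ₁) (ENNReal.ofReal p) P := by
    have h := hLp.const_mul σ₁
    have heq : (fun ω => σ₁ * ((X₁ ω - μ₁) / σ₁)) = fun ω => X₁ ω - μ₁ := by
      funext ω; field_simp
    rwa [heq] at h
  have hsub_sm : AEStronglyMeasurable (fun x : ℝ => x - μ₁) (mm.map QQ) :=
    (measurable_id.sub_const μ₁).aestronglyMeasurable
  have hsub_mem_ν : MemLp (fun x : ℝ => x - μ₁) (ENNReal.ofReal p) ν := by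
    refine (memLp_map_measure_iff (measurable_id.sub_const μ₁).aestronglyMeasurable
      hm₁.aemeasurable).mpr ?_
    exact hXmem
  have hQsub_mem : MemLp (fun u => QQ u - μ₁) (ENNReal.ofReal p) mm := by
    have h := (memLp_map_measure_iff hsub_sm hQae).mp (by rwa [hmapQ])
    exact h
  have hQsubInt : Integrable (fun u => QQ u - μ₁) mm := hQint.sub (integrable_const μ₁)
  have hlin_bound : ∀ᵐ u ∂mm, ‖2*u - 1‖ ≤ 1 := by
    filter_upwards [ae_mem_mm] with u hu
    rw [Real.norm_eq_abs, abs_le]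
    constructor <;> [linarith [hu.1]; linarith [hu.2]]
  have hlin_meas : Measurable (fun u : ℝ => 2*u - 1) :=
    (measurable_const.mul measurable_id).sub measurable_const
  have hlin_mem : MemLp (fun u : ℝ => 2*u - 1) (ENNReal.ofReal q) mm :=
    MemLp.of_bound hlin_meas.aestronglyMeasurable 1 hlin_bound
  have hlinInt : Integrable (fun u : ℝ => 2*u - 1) mm :=
    (integrable_const (1:ℝ)).mono' hlin_meas.aestronglyMeasurable hlin_bound
  -- step A : pass to the product measure and then to (0,1)²
  have hpairmap : P.map (fun ω => (X₁ ω, X₂ ω)) = ν.prod ν := by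
    rw [(indepFun_iff_map_prod_eq_prod_map_map hm₁.aemeasurable hm₂.aemeasurable).mp hind,
      ← hid]
  have habs_cont : Continuous (fun z : ℝ × ℝ => |z.1 - z.2|) :=
    (continuous_fst.sub continuous_snd).abs
  have hprodInt : Integrable (fun z : ℝ × ℝ => |z.1 - z.2|) (ν.prod ν) := by
    rw [← hpairmap]
    refine (integrable_map_measure habs_cont.aestronglyMeasurable
      (hm₁.prodMk hm₂).aemeasurable).mpr ?_
    exact (hX1i.sub hX2i).abs
  have hEqA : ∫ ω, |X₁ ω - X₂ ω| ∂P = ∫ z : ℝ × ℝ, |z.1 - z.2| ∂(ν.prod ν) := by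
    rw [← hpairmap,
      integral_map (hm₁.prodMk hm₂).aemeasurable habs_cont.aestronglyMeasurable]
  have hEqB : ∫ z : ℝ × ℝ, |z.1 - z.2| ∂(ν.prod ν) = ∫ x, (∫ y, |x - y| ∂ν) ∂ν :=
    integral_prod _ hprodInt
  have hg_meas : StronglyMeasurable (fun x => ∫ y, |x - y| ∂ν) :=
    habs_cont.stronglyMeasurable.integral_prod_right'
  have hEqC : ∫ x, (∫ y, |x - y| ∂ν) ∂ν = ∫ u, (∫ y, |QQ u - y| ∂ν) ∂mm := by
    conv_lhs => rw [← hmapQ]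
    rw [integral_map hQae (by rw [hmapQ]; exact hg_meas.aestronglyMeasurable), hmapQ]
  have hEqD : ∀ c : ℝ, ∫ y, |c - y| ∂ν = ∫ v, |c - QQ v| ∂mm := by
    intro c
    conv_lhs => rw [← hmapQ]
    rw [integral_map hQae ((by fun_prop : Continuous (fun y : ℝ => |c - y|)).aestronglyMeasurable)]
  have hT0 : ∫ ω, |X₁ ω - X₂ ω| ∂P = ∫ u, (∫ v, |QQ u - QQ v| ∂mm) ∂mm := by
    rw [hEqA, hEqB, hEqC]
    exact integral_congr_ae (Eventually.of_forall fun u => hEqD (QQ u))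
  -- inner integral computation
  have hinner : ∀ u ∈ Ioo (0:ℝ) 1,
      ∫ v, |QQ u - QQ v| ∂mm = (2*u - 1) * QQ u - ∫ v, e u v * QQ v ∂mm := by
    intro u hu
    have he_int : Integrable (fun v => e u v) mm :=
      (integrable_const (1:ℝ)).mono' (e_meas_right u).aestronglyMeasurable
        (Eventually.of_forall fun v => e_norm_le u v)
    have i1 : Integrable (fun v => e u v * QQ u) mm := he_int.mul_const _
    have i2 : Integrable (fun v => e u v * QQ v) mm :=
      hQint.bdd_mul (e_meas_right u).aestronglyMeasurable
        (Eventually.of_forall fun v => e_norm_le u v)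
    have hcong : ∫ v, |QQ u - QQ v| ∂mm = ∫ v, (e u v * QQ u - e u v * QQ v) ∂mm := by
      refine integral_congr_ae ?_
      filter_upwards [ae_mem_mm] with v hv
      by_cases h : v < u
      · have hle : QQ v ≤ QQ u := Q_monotoneOn hv hu h.le
        rw [abs_of_nonneg (sub_nonneg.mpr hle), e, if_pos h]
        ring
      · have hle : QQ u ≤ QQ v := Q_monotoneOn hu hv (not_lt.mp h)
        rw [abs_of_nonpos (sub_nonpos.mpr hle), e, if_neg h]
        ring
    rw [hcong, integral_sub i1 i2, MeasureTheory.integral_mul_const, integral_e_right hu]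
  -- outer integrability for the double term
  have hQsnd : Integrable (fun z : ℝ × ℝ => QQ z.2) (mm.prod mm) := by
    have hmap2 : (mm.prod mm).map Prod.snd = mm := by
      rw [Measure.map_snd_prod, measure_univ, one_smul]
    have h1 : Integrable QQ ((mm.prod mm).map Prod.snd) := by rwa [hmap2]
    refine (integrable_map_measure ?_ measurable_snd.aemeasurable).mp h1
    rw [hmap2]
    exact hQint.aestronglyMeasurable
  have hFprod : Integrable (fun z : ℝ × ℝ => e z.1 z.2 * QQ z.2) (mm.prod mm) :=
    hQsnd.bdd_mul e_meas2.aestronglyMeasurable (Eventually.of_forall fun z => e_norm_le _ _)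
  have o1 : Integrable (fun u => (2*u - 1) * QQ u) mm :=
    hQint.bdd_mul hlin_meas.aestronglyMeasurable hlin_bound
  have o2 : Integrable (fun u => ∫ v, e u v * QQ v ∂mm) mm := hFprod.integral_prod_left
  set A : ℝ := ∫ u, (2*u - 1) * QQ u ∂mm with hA_def
  have hT1 : ∫ u, (∫ v, |QQ u - QQ v| ∂mm) ∂mm
      = A - ∫ u, (∫ v, e u v * QQ v ∂mm) ∂mm := by
    rw [integral_congr_ae (g := fun u => (2*u - 1) * QQ u - ∫ v, e u v * QQ v ∂mm)
      (by filter_upwards [ae_mem_mm] with u hu using hinner u hu)]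
    exact integral_sub o1 o2
  have hswap : ∫ u, (∫ v, e u v * QQ v ∂mm) ∂mm = ∫ v, (∫ u, e u v * QQ v ∂mm) ∂mm :=
    integral_integral_swap hFprod
  have hBcalc : ∫ v, (∫ u, e u v * QQ v ∂mm) ∂mm = ∫ v, (1 - 2*v) * QQ v ∂mm := by
    refine integral_congr_ae ?_
    filter_upwards [ae_mem_mm] with v hv
    rw [MeasureTheory.integral_mul_const, integral_e_left hv]
  have hBneg : ∫ v, (1 - 2*v) * QQ v ∂mm = -A := by
    have hfun : (fun v => (1 - 2*v) * QQ v) = fun v => -((2*v - 1) * QQ v) := by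
      funext v; ring
    rw [hfun, MeasureTheory.integral_neg, hA_def]
  have hT2 : ∫ ω, |X₁ ω - X₂ ω| ∂P = 2 * A := by
    rw [hT0, hT1, hswap, hBcalc, hBneg]
    ring
  -- recentering
  have hA' : A = ∫ u, (2*u - 1) * (QQ u - μ₁) ∂mm := by
    have hsplit : ∫ u, (2*u - 1) * (QQ u - μ₁) ∂mm
        = (∫ u, (2*u - 1) * QQ u ∂mm) - ∫ u, (2*u - 1) * μ₁ ∂mm := by
      rw [← integral_sub o1 (hlinInt.mul_const μ₁)]
      congr 1
      funext u
      ring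
    rw [hsplit, MeasureTheory.integral_mul_const, integral_two_mul_sub_one, zero_mul, sub_zero]
  -- Hölder
  have hint_rhs : Integrable (fun u => ‖QQ u - μ₁‖ * ‖2*u - 1‖) mm := by
    have h := hQsubInt.norm.bdd_mul (hlin_meas.norm).aestronglyMeasurable
      (by filter_upwards [hlin_bound] with u hu using by simpa using hu)
    simpa [mul_comm] using h
  have hint_lhs : Integrable (fun u => (2*u - 1) * (QQ u - μ₁)) mm :=
    hQsubInt.bdd_mul hlin_meas.aestronglyMeasurable hlin_bound
  have hH1 : ∫ u, (2*u - 1) * (QQ u - μ₁) ∂mm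
      ≤ ∫ u, ‖QQ u - μ₁‖ * ‖2*u - 1‖ ∂mm := by
    refine integral_mono hint_lhs hint_rhs fun u => ?_
    calc (2*u - 1) * (QQ u - μ₁) ≤ |(2*u - 1) * (QQ u - μ₁)| := le_abs_self _
    _ = ‖QQ u - μ₁‖ * ‖2*u - 1‖ := by
        rw [abs_mul, Real.norm_eq_abs, Real.norm_eq_abs, mul_comm]
  have hH2 := integral_mul_norm_le_Lp_mul_Lq hpq hQsub_mem hlin_mem
  have hHolder : ∫ u, (2*u - 1) * (QQ u - μ₁) ∂mm
      ≤ (∫ u, |QQ u - μ₁| ^ p ∂mm) ^ (1/p) * (∫ u, |2*u - 1| ^ q ∂mm) ^ (1/q) := by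
    refine le_trans (le_trans hH1 hH2) (le_of_eq ?_)
    simp only [Real.norm_eq_abs]
  -- compute the two factors
  have hrpow_cont : Continuous (fun x : ℝ => |x - μ₁| ^ p) :=
    ((continuous_id.sub continuous_const).abs).rpow_const (fun x => Or.inr hp0.le)
  have h5a : ∫ u, |QQ u - μ₁| ^ p ∂mm = ∫ x, |x - μ₁| ^ p ∂ν := by
    conv_rhs => rw [← hmapQ]
    rw [integral_map hQae hrpow_cont.aestronglyMeasurable]
  have h5b : ∫ x, |x - μ₁| ^ p ∂ν = ∫ ω, |X₁ ω - μ₁| ^ p ∂P := by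
    rw [hν_def, integral_map hm₁.aemeasurable hrpow_cont.aestronglyMeasurable]
  have h5c : ∫ ω, |X₁ ω - μ₁| ^ p ∂P = σ₁ ^ p * ∫ ω, |(X₁ ω - μ₁) / σ₁| ^ p ∂P := by
    rw [← MeasureTheory.integral_const_mul]
    refine integral_congr_ae (Eventually.of_forall fun ω => ?_)
    show |X₁ ω - μ₁| ^ p = σ₁ ^ p * |(X₁ ω - μ₁) / σ₁| ^ p
    rw [abs_div, abs_of_pos hσ₁pos, Real.div_rpow (abs_nonneg _) hσ₁pos.le]
    rw [mul_div_cancel₀]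
    exact ne_of_gt (Real.rpow_pos_of_pos hσ₁pos p)
  have hIznn : 0 ≤ ∫ ω, |(X₁ ω - μ₁) / σ₁| ^ p ∂P :=
    integral_nonneg fun ω => Real.rpow_nonneg (abs_nonneg _) p
  have hfac1 : (∫ u, |QQ u - μ₁| ^ p ∂mm) ^ (1/p)
      = σ₁ * (∫ ω, |(X₁ ω - μ₁) / σ₁| ^ p ∂P) ^ (1/p) := by
    rw [h5a, h5b, h5c, Real.mul_rpow (Real.rpow_nonneg hσ₁pos.le p) hIznn,
      ← Real.rpow_mul hσ₁pos.le, mul_one_div, div_self hp0.ne', Real.rpow_one]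
  have hfac2 : (∫ u, |2*u - 1| ^ q ∂mm) ^ (1/q)
      = ((p - 1) / (2*p - 1)) ^ ((p - 1) / p) := by
    rw [integral_abs_rpow hq0]
    have h1 : q + 1 = (2*p - 1) / (p - 1) := by
      rw [hq_def]; field_simp; ring
    have h2 : (1:ℝ)/q = (p - 1)/p := by
      rw [hq_def, one_div_div]
    rw [h1, one_div_div, h2]
  -- final assembly
  rw [hT2, hA']
  have hle : ∫ u, (2*u - 1) * (QQ u - μ₁) ∂mm
      ≤ σ₁ * (∫ ω, |(X₁ ω - μ₁) / σ₁| ^ p ∂P) ^ (1/p)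
        * ((p - 1) / (2*p - 1)) ^ ((p - 1) / p) := by
    calc ∫ u, (2*u - 1) * (QQ u - μ₁) ∂mm
        ≤ (∫ u, |QQ u - μ₁| ^ p ∂mm) ^ (1/p) * (∫ u, |2*u - 1| ^ q ∂mm) ^ (1/q) := hHolder
    _ = σ₁ * (∫ ω, |(X₁ ω - μ₁) / σ₁| ^ p ∂P) ^ (1/p)
        * ((p - 1) / (2*p - 1)) ^ ((p - 1) / p) := by rw [hfac1, hfac2]
  calc 2 * ∫ u, (2*u - 1) * (QQ u - μ₁) ∂mm
      ≤ 2 * (σ₁ * (∫ ω, |(X₁ ω - μ₁) / σ₁| ^ p ∂P) ^ (1/p)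
        * ((p - 1) / (2*p - 1)) ^ ((p - 1) / p)) := by linarith
  _ = (2 * (∫ ω, |(X₁ ω - μ₁) / σ₁| ^ p ∂P) ^ (1 / p)
        * ((p - 1) / (2 * p - 1)) ^ ((p - 1) / p)) * σ₁ := by ring
end

section
/- Let ρ be a probability measure on ℝ × ℝ that is absolutely continuous with respect to two-dimensional Lebesgue measure, and let f₂ denote a density (with respect to Lebesgue measure on ℝ) of the second marginal of ρ. Let π(x) = condCDF(ρ') x x, where ρ' is the pushforward of ρ under the coordinate swap (so π(x) is the conditional CDF of the first coordinate, given the second coordinate equals x, evaluated at x). Then ∫_ℝ f₂(x)·π(x) dx = ρ({(u, v) : u ≤ v}). Consequently, if R = ρ({(u, v) : u ≤ v}) > 0, the function h(x) = f₂(x)·π(x)/R is a probability density function (nonnegative with total integral 1). -/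
open MeasureTheory ProbabilityTheory Real Set

lemma measurable_ofReal_condCDF_diag (ρ : Measure (ℝ × ℝ)) [IsFiniteMeasure ρ] :
    Measurable fun x => ENNReal.ofReal (condCDF ρ x x) := by
  have hf := isCondKernelCDF_condCDF ρ
  have hs : MeasurableSet {p : (Unit × ℝ) × ℝ | p.2 ≤ p.1.2} :=
    measurableSet_le measurable_snd (measurable_snd.comp measurable_fst)
  have hm := (ProbabilityTheory.Kernel.measurable_kernel_prodMk_left
    (κ := hf.toKernel _) hs).comp
    (measurable_const.prodMk measurable_id :
      Measurable fun x : ℝ => (((), x) : Unit × ℝ))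
  have h1 : ∀ x : ℝ, ENNReal.ofReal (condCDF ρ x x)
      = hf.toKernel _ ((), x) {y : ℝ | ((((), x) : Unit × ℝ), y) ∈
          {p : (Unit × ℝ) × ℝ | p.2 ≤ p.1.2}} := by
    intro x
    have h2 : {y : ℝ | ((((), x) : Unit × ℝ), y) ∈
        {p : (Unit × ℝ) × ℝ | p.2 ≤ p.1.2}} = Iic x := by
      ext y; simp [Set.mem_Iic]
    rw [h2, hf.toKernel_Iic]
  simp_rw [h1]
  exact hm

lemma lintegral_condCDF_diag (ρ : Measure (ℝ × ℝ)) [IsFiniteMeasure ρ] :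
    ∫⁻ x, ENNReal.ofReal (condCDF ρ x x) ∂ρ.fst = ρ {p : ℝ × ℝ | p.2 ≤ p.1} := by
  have hf := isCondKernelCDF_condCDF ρ
  have hs : MeasurableSet {p : ℝ × ℝ | p.2 ≤ p.1} :=
    measurableSet_le measurable_snd measurable_fst
  have h := ProbabilityTheory.lintegral_toKernel_mem hf () hs
  simp only [Kernel.const_apply] at h
  rw [← h]
  refine lintegral_congr fun x => ?_
  have : Prod.mk x ⁻¹' {p : ℝ × ℝ | p.2 ≤ p.1} = Iic x := by
    ext y; simp [Set.mem_Iic]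
  rw [this, hf.toKernel_Iic]

/-- If `ρ` is an absolutely continuous probability measure on `ℝ × ℝ` with second-marginal
density `f₂`, and `π(x) = condCDF ρ' x x` (conditional CDF of the first coordinate given the
second equals `x`, evaluated at `x`, where `ρ'` is `ρ` pushed forward by the swap), then
`∫ f₂(x) π(x) dx = ρ{(u,v) : u ≤ v}`, and for `R = ρ{(u,v) : u ≤ v} > 0` the function
`h(x) = f₂(x) π(x) / R` is a probability density function. -/
theorem density_h_is_pdf
    (ρ : Measure (ℝ × ℝ)) [IsProbabilityMeasure ρ]
    (hac : ρ ≪ (volume : Measure (ℝ × ℝ)))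
    (f₂ : ℝ → ℝ) (hf₂meas : Measurable f₂) (hf₂nonneg : ∀ x, 0 ≤ f₂ x)
    (hf₂ : ρ.map Prod.snd = volume.withDensity fun x => ENNReal.ofReal (f₂ x)) :
    (∫ x, f₂ x * condCDF (ρ.map Prod.swap) x x)
        = (ρ {p : ℝ × ℝ | p.1 ≤ p.2}).toReal
    ∧ (0 < (ρ {p : ℝ × ℝ | p.1 ≤ p.2}).toReal →
        (∀ x, 0 ≤ f₂ x * condCDF (ρ.map Prod.swap) x x
            / (ρ {p : ℝ × ℝ | p.1 ≤ p.2}).toReal)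
        ∧ ∫ x, f₂ x * condCDF (ρ.map Prod.swap) x x
            / (ρ {p : ℝ × ℝ | p.1 ≤ p.2}).toReal = 1) := by
  set ρ' := ρ.map Prod.swap with hρ'
  haveI : IsProbabilityMeasure ρ' := Measure.isProbabilityMeasure_map measurable_swap.aemeasurable
  -- key: ∫⁻ x, ofReal (condCDF ρ' x x) ∂ρ'.fst = ρ {p | p.1 ≤ p.2}
  have hfst : ρ'.fst = ρ.map Prod.snd := by
    rw [hρ', Measure.fst_map_swap, Measure.snd]
  have hset : ρ' {p : ℝ × ℝ | p.2 ≤ p.1} = ρ {p : ℝ × ℝ | p.1 ≤ p.2} := by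
    rw [hρ', Measure.map_apply measurable_swap
      (measurableSet_le measurable_snd measurable_fst)]
    rfl
  have hkey : ∫⁻ x, ENNReal.ofReal (condCDF ρ' x x) ∂(ρ.map Prod.snd)
      = ρ {p : ℝ × ℝ | p.1 ≤ p.2} := by
    rw [← hfst, lintegral_condCDF_diag, hset]
  have hπmeas : Measurable fun x => ENNReal.ofReal (condCDF ρ' x x) :=
    measurable_ofReal_condCDF_diag ρ'
  have hlint : ∫⁻ x, ENNReal.ofReal (f₂ x * condCDF ρ' x x)
      = ρ {p : ℝ × ℝ | p.1 ≤ p.2} := by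
    rw [← hkey, hf₂,
      lintegral_withDensity_eq_lintegral_mul _ (hf₂meas.ennreal_ofReal) hπmeas]
    refine lintegral_congr fun x => ?_
    simp [ENNReal.ofReal_mul (hf₂nonneg x)]
  have hnonneg : ∀ x, 0 ≤ f₂ x * condCDF ρ' x x := fun x =>
    mul_nonneg (hf₂nonneg x) (condCDF_nonneg ρ' x x)
  have hmeas : AEMeasurable (fun x => f₂ x * condCDF ρ' x x) (volume : Measure ℝ) := by
    have : Measurable fun x => condCDF ρ' x x := by
      have := hπmeas.ennreal_toReal
      simpa [ENNReal.toReal_ofReal (condCDF_nonneg ρ' _ _)] using this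
    exact (hf₂meas.mul this).aemeasurable
  have hint : (∫ x, f₂ x * condCDF ρ' x x)
      = (ρ {p : ℝ × ℝ | p.1 ≤ p.2}).toReal := by
    rw [integral_eq_lintegral_of_nonneg_ae (Filter.Eventually.of_forall hnonneg) 
      hmeas.aestronglyMeasurable, hlint]
  refine ⟨hint, fun hR => ⟨fun x => div_nonneg (hnonneg x) hR.le, ?_⟩⟩
  simp_rw [div_eq_mul_inv]
  rw [integral_mul_const, hint, mul_inv_cancel₀ hR.ne']
end

section
/- Let ρ be a probability measure on ℝ × ℝ that is absolutely continuous with respect to two-dimensional Lebesgue measure, with marginal densities f₁ (first coordinate) and f₂ (second coordinate). Define π₁(x) = condCDF(ρ) x x and π₂(x) = condCDF(ρ') x x where ρ' is the pushforward of ρ under the coordinate swap. Then the pushforward of ρ under the map (u, v) ↦ min{u, v} is absolutely continuous with density x ↦ f₁(x)·(1 − π₁(x)) + f₂(x)·(1 − π₂(x)) with respect to Lebesgue measure on ℝ; equivalently, the density of the minimum equals f₁ + f₂ minus the density of the maximum. -/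
open MeasureTheory ProbabilityTheory Real
open Set

lemma aux_measurable_ofReal_condCDF_diag (ρ : Measure (ℝ × ℝ)) [IsFiniteMeasure ρ] :
    Measurable fun a : ℝ => ENNReal.ofReal (condCDF ρ a a) := by
  have hf := isCondKernelCDF_condCDF ρ
  have hs : MeasurableSet {p : ℝ × ℝ | p.2 ≤ p.1} :=
    measurableSet_le measurable_snd measurable_fst
  have h := ProbabilityTheory.Kernel.measurable_kernel_prodMk_left'
    (η := hf.toKernel _) hs ()
  have heq : (fun b : ℝ => (hf.toKernel _ ((), b)) (Prod.mk b ⁻¹' {p : ℝ × ℝ | p.2 ≤ p.1}))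
      = fun a : ℝ => ENNReal.ofReal (condCDF ρ a a) := by
    funext b
    have h2 : (Prod.mk b ⁻¹' {p : ℝ × ℝ | p.2 ≤ p.1}) = Iic b := by ext y; simp
    rw [h2, ProbabilityTheory.IsCondKernelCDF.toKernel_Iic]
  rwa [heq] at h

lemma aux_measurable_condCDF_diag (ρ : Measure (ℝ × ℝ)) [IsFiniteMeasure ρ] :
    Measurable fun a : ℝ => condCDF ρ a a := by
  have h := (aux_measurable_ofReal_condCDF_diag ρ).ennreal_toReal
  simpa [ENNReal.toReal_ofReal (condCDF_nonneg ρ _ _)] using h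

lemma aux_strict (μ : Measure (ℝ × ℝ)) [IsProbabilityMeasure μ] (f : ℝ → ℝ)
    (hfmeas : Measurable f) (hfnonneg : ∀ x, 0 ≤ f x)
    (hμf : μ.map Prod.fst = volume.withDensity fun x => ENNReal.ofReal (f x)) (t : ℝ) :
    μ {p : ℝ × ℝ | p.1 ≤ t ∧ p.1 < p.2}
      = ∫⁻ x in Iic t, ENNReal.ofReal (f x * (1 - condCDF μ x x)) := by
  have hμfst : μ.fst = volume.withDensity fun x => ENNReal.ofReal (f x) := by
    rw [Measure.fst]; exact hμf
  have hf := isCondKernelCDF_condCDF μ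
  have hS : MeasurableSet {p : ℝ × ℝ | p.1 ≤ t ∧ p.1 < p.2} :=
    (measurableSet_le measurable_fst measurable_const).inter
      (measurableSet_lt measurable_fst measurable_snd)
  have key := ProbabilityTheory.lintegral_toKernel_mem hf () hS
  simp only [Kernel.const_apply] at key
  have hker : ∀ b : ℝ, b ≤ t →
      hf.toKernel _ ((), b) {y : ℝ | (b, y) ∈ {p : ℝ × ℝ | p.1 ≤ t ∧ p.1 < p.2}}
        = 1 - ENNReal.ofReal (condCDF μ b b) := by
    intro b hb
    have h2 : {y : ℝ | (b, y) ∈ {p : ℝ × ℝ | p.1 ≤ t ∧ p.1 < p.2}} = Ioi b := by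
      ext y; simp [hb]
    rw [h2, ← compl_Iic, measure_compl measurableSet_Iic (measure_ne_top _ _),
      ProbabilityTheory.IsCondKernelCDF.toKernel_Iic]
    congr 1
    exact measure_univ
  have hind : (fun b : ℝ =>
      hf.toKernel _ ((), b) {y : ℝ | (b, y) ∈ {p : ℝ × ℝ | p.1 ≤ t ∧ p.1 < p.2}})
      = Set.indicator (Iic t) (fun b => 1 - ENNReal.ofReal (condCDF μ b b)) := by
    funext b
    by_cases hb : b ≤ t
    · rw [hker b hb, Set.indicator_of_mem (by simpa using hb)]
    · rw [Set.indicator_of_notMem (by simpa using hb)]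
      have h2 : {y : ℝ | (b, y) ∈ {p : ℝ × ℝ | p.1 ≤ t ∧ p.1 < p.2}} = ∅ := by
        ext y; simp [hb]
      rw [h2]; simp
  change ∫⁻ b, hf.toKernel _ ((), b) {y : ℝ | (b, y) ∈ {p : ℝ × ℝ | p.1 ≤ t ∧ p.1 < p.2}} ∂μ.fst = _ at key
  rw [hind] at key
  have key2 : ∫⁻ b in Iic t, (1 - ENNReal.ofReal (condCDF μ b b)) ∂μ.fst
      = μ {p : ℝ × ℝ | p.1 ≤ t ∧ p.1 < p.2} := by
    rw [← key]; exact (lintegral_indicator measurableSet_Iic _).symm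
  rw [hμfst, setLIntegral_withDensity_eq_setLIntegral_mul volume (g := fun b => 1 - ENNReal.ofReal (condCDF μ b b)) (hfmeas.ennreal_ofReal)
      (measurable_const.sub (aux_measurable_ofReal_condCDF_diag μ)) measurableSet_Iic] at key2
  rw [← key2]
  refine setLIntegral_congr_fun measurableSet_Iic (fun x _ => ?_)
  simp only [Pi.mul_apply]
  rw [ENNReal.ofReal_mul (hfnonneg x), ENNReal.ofReal_sub _ (condCDF_nonneg μ _ _),
    ENNReal.ofReal_one]

/-- The pushforward of an absolutely continuous probability measure `ρ` on `ℝ × ℝ` under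
`(u, v) ↦ min u v` has Lebesgue density `x ↦ f₁(x)(1 − π₁(x)) + f₂(x)(1 − π₂(x))`, where
`f₁, f₂` are the marginal densities and `π₁(x) = condCDF ρ x x`,
`π₂(x) = condCDF ρ' x x` with `ρ'` the swap pushforward of `ρ`; equivalently, the density of
the minimum equals `f₁ + f₂` minus the density of the maximum. -/
theorem min_pushforward_density
    (ρ : Measure (ℝ × ℝ)) [IsProbabilityMeasure ρ]
    (hac : ρ ≪ (volume : Measure (ℝ × ℝ)))
    (f₁ f₂ : ℝ → ℝ)
    (hf₁meas : Measurable f₁) (hf₂meas : Measurable f₂)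
    (hf₁nonneg : ∀ x, 0 ≤ f₁ x) (hf₂nonneg : ∀ x, 0 ≤ f₂ x)
    (hf₁ : ρ.map Prod.fst = volume.withDensity fun x => ENNReal.ofReal (f₁ x))
    (hf₂ : ρ.map Prod.snd = volume.withDensity fun x => ENNReal.ofReal (f₂ x)) :
    (ρ.map (fun p : ℝ × ℝ => min p.1 p.2)
        = volume.withDensity (fun x => ENNReal.ofReal
            (f₁ x * (1 - condCDF ρ x x) + f₂ x * (1 - condCDF (ρ.map Prod.swap) x x))))
    ∧ ∀ x, f₁ x * (1 - condCDF ρ x x) + f₂ x * (1 - condCDF (ρ.map Prod.swap) x x)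
        = f₁ x + f₂ x
          - (f₁ x * condCDF ρ x x + f₂ x * condCDF (ρ.map Prod.swap) x x) := by
  refine ⟨?_, fun x => by ring⟩
  set ρ' : Measure (ℝ × ℝ) := ρ.map Prod.swap with hρ'
  have hρ'prob : IsProbabilityMeasure ρ' :=
    Measure.isProbabilityMeasure_map measurable_swap.aemeasurable
  have hρ'fst : ρ'.map Prod.fst = volume.withDensity fun x => ENNReal.ofReal (f₂ x) := by
    rw [hρ', Measure.map_map measurable_fst measurable_swap]
    have : (Prod.fst ∘ Prod.swap : ℝ × ℝ → ℝ) = Prod.snd := rfl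
    rw [this, hf₂]
  -- the diagonal is null
  have hdiagvol : (volume : Measure (ℝ × ℝ)) {p : ℝ × ℝ | p.1 = p.2} = 0 := by
    have hm : MeasurableSet {p : ℝ × ℝ | p.1 = p.2} :=
      measurableSet_eq_fun measurable_fst measurable_snd
    rw [Measure.volume_eq_prod, Measure.prod_apply hm]
    have : ∀ x : ℝ, (volume : Measure ℝ) (Prod.mk x ⁻¹' {p : ℝ × ℝ | p.1 = p.2}) = 0 := by
      intro x
      have : (Prod.mk x ⁻¹' {p : ℝ × ℝ | p.1 = p.2}) = {x} := by ext y; simp [eq_comm]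
      rw [this, measure_singleton]
    simp [this]
  have hdiag : ρ {p : ℝ × ℝ | p.1 = p.2} = 0 := hac hdiagvol
  -- measurability facts
  have hπ₁ : Measurable fun x : ℝ => condCDF ρ x x := aux_measurable_condCDF_diag ρ
  have hπ₂ : Measurable fun x : ℝ => condCDF ρ' x x := aux_measurable_condCDF_diag ρ'
  have hg₁meas : Measurable fun x : ℝ => f₁ x * (1 - condCDF ρ x x) :=
    hf₁meas.mul (measurable_const.sub hπ₁)
  have hg₂meas : Measurable fun x : ℝ => f₂ x * (1 - condCDF ρ' x x) :=
    hf₂meas.mul (measurable_const.sub hπ₂)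
  have hminmeas : Measurable fun p : ℝ × ℝ => min p.1 p.2 :=
    measurable_fst.min measurable_snd
  haveI : IsProbabilityMeasure (ρ.map fun p : ℝ × ℝ => min p.1 p.2) :=
    Measure.isProbabilityMeasure_map hminmeas.aemeasurable
  refine Measure.ext_of_Iic _ _ fun t => ?_
  -- sets
  set A : Set (ℝ × ℝ) := {p | p.1 ≤ t ∧ p.1 < p.2} with hA
  set B : Set (ℝ × ℝ) := {p | p.2 ≤ t ∧ p.2 < p.1} with hB
  set C : Set (ℝ × ℝ) := {p | p.1 ≤ t ∧ p.1 = p.2} with hC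
  have hAmeas : MeasurableSet A :=
    (measurableSet_le measurable_fst measurable_const).inter
      (measurableSet_lt measurable_fst measurable_snd)
  have hBmeas : MeasurableSet B :=
    (measurableSet_le measurable_snd measurable_const).inter
      (measurableSet_lt measurable_snd measurable_fst)
  have hLHS : (ρ.map fun p : ℝ × ℝ => min p.1 p.2) (Iic t) = ρ (A ∪ B) := by
    rw [Measure.map_apply hminmeas measurableSet_Iic]
    have hpre : (fun p : ℝ × ℝ => min p.1 p.2) ⁻¹' Iic t = (A ∪ B) ∪ C := by
      ext ⟨a, b⟩
      simp only [Set.mem_preimage, Set.mem_Iic, Set.mem_union, hA, hB, hC, Set.mem_setOf_eq]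
      constructor
      · intro h
        rcases lt_trichotomy a b with hc | hc | hc
        · exact Or.inl (Or.inl ⟨by rwa [min_eq_left hc.le] at h, hc⟩)
        · exact Or.inr ⟨by rwa [min_eq_left hc.le] at h, hc⟩
        · exact Or.inl (Or.inr ⟨by rwa [min_eq_right hc.le] at h, hc⟩)
      · rintro ((⟨h1, -⟩ | ⟨h1, -⟩) | ⟨h1, -⟩)
        · exact le_trans (min_le_left _ _) h1
        · exact le_trans (min_le_right _ _) h1
        · exact le_trans (min_le_left _ _) h1
    rw [hpre]
    have hCnull : ρ C = 0 :=
      measure_mono_null (fun p hp => hp.2) hdiag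
    refine le_antisymm ?_ (measure_mono Set.subset_union_left)
    calc ρ ((A ∪ B) ∪ C) ≤ ρ (A ∪ B) + ρ C := measure_union_le _ _
      _ = ρ (A ∪ B) := by rw [hCnull, add_zero]
  have hdisj : Disjoint A B := by
    rw [Set.disjoint_left]
    rintro p ⟨-, h1⟩ ⟨-, h2⟩
    exact absurd h2 (not_lt_of_gt h1)
  have hρB : ρ B = ρ' A := by
    rw [hρ', Measure.map_apply measurable_swap hAmeas]
    congr 1
  have key1 := aux_strict ρ f₁ hf₁meas hf₁nonneg hf₁ t
  have key2 := aux_strict ρ' f₂ hf₂meas hf₂nonneg hρ'fst t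
  rw [hLHS, measure_union hdisj hBmeas, hρB, key1, key2,
    withDensity_apply _ measurableSet_Iic, ← lintegral_add_left hg₁meas.ennreal_ofReal]
  refine setLIntegral_congr_fun measurableSet_Iic (fun x _ => ?_)
  rw [← ENNReal.ofReal_add (mul_nonneg (hf₁nonneg x) (by linarith [condCDF_le_one ρ x x]))
    (mul_nonneg (hf₂nonneg x) (by linarith [condCDF_le_one ρ' x x]))]
end

section
/- Let X₁ and X₂ be integrable real-valued random variables on a common probability space whose joint law ρ on ℝ × ℝ is absolutely continuous with respect to two-dimensional Lebesgue measure, with marginal densities f₁ and f₂, and suppose E[|X₁ − X₂|] < ∞. Define π₁(x) = condCDF(ρ) x x and π₂(x) = condCDF(ρ') x x where ρ' is the pushforward of ρ under the coordinate swap. Then E[|X₁ − X₂|] = ∫_ℝ x·[2 f₁(x)·π₁(x) + 2 f₂(x)·π₂(x) − f₁(x) − f₂(x)] dx. -/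
open MeasureTheory ProbabilityTheory Real
open Set Filter Topology
open scoped NNReal ENNReal


lemma measurable_condCDF_diag (ρ : Measure (ℝ × ℝ)) :
    Measurable fun a => condCDF ρ a a := by
  have h : (fun a => condCDF ρ a a)
      = fun a => ⨅ q : ℚ, if a < (q : ℝ) then condCDF ρ a q else 1 := by
    funext a
    have hbdd : BddBelow (range fun q : ℚ => if a < (q : ℝ) then condCDF ρ a q else 1) := by
      refine ⟨0, ?_⟩
      rintro x ⟨q', rfl⟩
      dsimp only
      split_ifs
      · exact condCDF_nonneg ρ a _
      · exact zero_le_one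
    apply le_antisymm
    · refine le_ciInf fun q => ?_
      split_ifs with h
      · exact (condCDF ρ a).mono h.le
      · exact condCDF_le_one ρ a a
    · haveI : Nonempty {r' : ℚ // a < (r' : ℝ)} :=
        let ⟨q, hq⟩ := exists_rat_gt a; ⟨⟨q, hq⟩⟩
      rw [← (condCDF ρ a).iInf_rat_gt_eq a]
      refine le_ciInf fun q => ?_
      refine ciInf_le_of_le hbdd (q : ℚ) ?_
      rw [if_pos q.2]
  rw [h]
  exact Measurable.iInf fun q =>
    Measurable.ite (measurableSet_lt measurable_id measurable_const)
      (measurable_condCDF ρ q) measurable_const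


lemma condKernel_Iic_ae_eq (ρ : Measure (ℝ × ℝ)) [IsFiniteMeasure ρ] :
    ∀ᵐ a ∂ρ.fst, ∀ x : ℝ,
      ρ.condKernel a (Set.Iic x) = ENNReal.ofReal (condCDF ρ a x) := by
  have hq : ∀ᵐ a ∂ρ.fst, ∀ q : ℚ,
      ρ.condKernel a (Set.Iic (q : ℝ)) = ENNReal.ofReal (condCDF ρ a q) := by
    rw [ae_all_iff]
    intro q
    refine ae_eq_of_forall_setLIntegral_eq_of_sigmaFinite
      (Kernel.measurable_coe _ measurableSet_Iic)
      (measurable_condCDF ρ q).ennreal_ofReal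
      fun s hs _ => ?_
    rw [Measure.setLIntegral_condKernel_eq_measure_prod hs measurableSet_Iic,
      setLIntegral_condCDF ρ _ hs]
  filter_upwards [hq] with a ha x
  obtain ⟨u, hu_anti, hux, hu_tendsto⟩ := exists_seq_strictAnti_tendsto x
  have hqex : ∀ n : ℕ, ∃ q : ℚ, u (n + 1) < (q : ℝ) ∧ (q : ℝ) < u n := fun n =>
    exists_rat_btwn (hu_anti (Nat.lt_succ_self n))
  choose q hq1 hq2 using hqex
  have hxq : ∀ n, x < (q n : ℝ) := fun n => (hux (n + 1)).trans (hq1 n)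
  have hq_anti : StrictAnti fun n => (q n : ℝ) := by
    refine strictAnti_nat_of_succ_lt fun n => ?_
    exact (hq2 (n + 1)).trans (hq1 n)
  have hq_tendsto : Tendsto (fun n => (q n : ℝ)) atTop (𝓝 x) := by
    refine tendsto_of_tendsto_of_tendsto_of_le_of_le
      (tendsto_const_nhds) hu_tendsto
      (fun n => (hxq n).le) (fun n => (hq2 n).le)
  have hIic : Set.Iic x = ⋂ n, Set.Iic ((q n : ℝ)) := by
    ext b
    simp only [Set.mem_Iic, Set.mem_iInter]
    constructor
    · exact fun hb n => hb.trans (hxq n).le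
    · exact fun hb => ge_of_tendsto hq_tendsto (Eventually.of_forall hb)
  have h1 : Tendsto (fun n => ρ.condKernel a (Set.Iic ((q n : ℝ)))) atTop
      (𝓝 (ρ.condKernel a (Set.Iic x))) := by
    rw [hIic]
    exact tendsto_measure_iInter_atTop
      (fun n => measurableSet_Iic.nullMeasurableSet)
      (fun m n hmn => Set.Iic_subset_Iic.2 (hq_anti.antitone hmn))
      ⟨0, measure_ne_top _ _⟩
  have h2 : Tendsto (fun n => ENNReal.ofReal (condCDF ρ a (q n))) atTop
      (𝓝 (ENNReal.ofReal (condCDF ρ a x))) := by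
    refine (ENNReal.continuous_ofReal.tendsto _).comp ?_
    refine ((condCDF ρ a).right_continuous x).tendsto.comp ?_
    exact tendsto_nhdsWithin_of_tendsto_nhds_of_eventually_within _ hq_tendsto
      (Eventually.of_forall fun n => (hxq n).le)
  have h1' : Tendsto (fun n => ENNReal.ofReal (condCDF ρ a (q n))) atTop
      (𝓝 (ρ.condKernel a (Set.Iic x))) := by
    refine h1.congr fun n => ?_
    exact ha (q n)
  exact tendsto_nhds_unique h1' h2

lemma diag_null : (volume : Measure (ℝ × ℝ)) {p : ℝ × ℝ | p.2 = p.1} = 0 := by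
  have hm : MeasurableSet {p : ℝ × ℝ | p.2 = p.1} :=
    measurableSet_eq_fun measurable_snd measurable_fst
  rw [Measure.volume_eq_prod, Measure.prod_apply hm]
  have h : ∀ x : ℝ, (Prod.mk x ⁻¹' {p : ℝ × ℝ | p.2 = p.1}) = {x} := by
    intro x; ext y; simp [eq_comm]
  simp [h]

lemma integral_indicator_le_diag (ρ : Measure (ℝ × ℝ)) [IsFiniteMeasure ρ]
    (h1 : Integrable (fun p : ℝ × ℝ => p.1) ρ) :
    ∫ p, ({p : ℝ × ℝ | p.2 ≤ p.1}).indicator (fun p => p.1) p ∂ρ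
      = ∫ a, a * condCDF ρ a a ∂ρ.fst := by
  have hsm : MeasurableSet {p : ℝ × ℝ | p.2 ≤ p.1} :=
    measurableSet_le measurable_snd measurable_fst
  have hint : Integrable
      (fun p : ℝ × ℝ => ({p : ℝ × ℝ | p.2 ≤ p.1}).indicator (fun p => p.1) p) ρ :=
    h1.indicator hsm
  rw [← Measure.integral_condKernel hint]
  refine integral_congr_ae ?_
  filter_upwards [condKernel_Iic_ae_eq ρ] with b hb
  have h : ∀ ω : ℝ, ({p : ℝ × ℝ | p.2 ≤ p.1}).indicator (fun p => p.1) (b, ω)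
      = (Set.Iic b).indicator (fun _ => b) ω := by
    intro ω
    by_cases hω : ω ≤ b <;> simp [Set.indicator, hω]
  simp_rw [h]
  rw [integral_indicator_const (b : ℝ) measurableSet_Iic, measureReal_def, hb b,
    ENNReal.toReal_ofReal (condCDF_nonneg ρ b b), smul_eq_mul, mul_comm]

lemma integral_indicator_lt_diag (ρ : Measure (ℝ × ℝ)) [IsFiniteMeasure ρ]
    (hac : ρ ≪ (volume : Measure (ℝ × ℝ)))
    (h1 : Integrable (fun p : ℝ × ℝ => p.1) ρ) :
    ∫ p, ({p : ℝ × ℝ | p.2 < p.1}).indicator (fun p => p.1) p ∂ρ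
      = ∫ a, a * condCDF ρ a a ∂ρ.fst := by
  rw [← integral_indicator_le_diag ρ h1]
  refine integral_congr_ae ?_
  have hdiag : ρ {p : ℝ × ℝ | p.2 = p.1} = 0 := hac diag_null
  have hae : ∀ᵐ p ∂ρ, p.2 ≠ p.1 := by
    rw [ae_iff]
    simpa using hdiag
  filter_upwards [hae] with p hp
  by_cases h : p.2 ≤ p.1
  · have h' : p.2 < p.1 := lt_of_le_of_ne h hp
    simp [Set.indicator, h, h']
  · have h' : ¬ p.2 < p.1 := fun hlt => h hlt.le
    simp [Set.indicator, h, h']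

/-- If `(X₁, X₂)` has an absolutely continuous joint law `ρ` with marginal densities `f₁, f₂`,
and `π₁(x) = condCDF ρ x x`, `π₂(x) = condCDF ρ' x x` (with `ρ'` the swap pushforward of `ρ`),
then `E|X₁ − X₂| = ∫ x (2 f₁(x) π₁(x) + 2 f₂(x) π₂(x) − f₁(x) − f₂(x)) dx`. -/
theorem abs_diff_expectation_eq_integral_density
    {Ω : Type*} [MeasurableSpace Ω] (P : Measure Ω) [IsProbabilityMeasure P]
    (X₁ X₂ : Ω → ℝ) (hm₁ : Measurable X₁) (hm₂ : Measurable X₂)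
    (hi₁ : Integrable X₁ P) (hi₂ : Integrable X₂ P)
    (hdiff : Integrable (fun ω => |X₁ ω - X₂ ω|) P)
    (hac : P.map (fun ω => (X₁ ω, X₂ ω)) ≪ (volume : Measure (ℝ × ℝ)))
    (f₁ f₂ : ℝ → ℝ)
    (hf₁meas : Measurable f₁) (hf₂meas : Measurable f₂)
    (hf₁nonneg : ∀ x, 0 ≤ f₁ x) (hf₂nonneg : ∀ x, 0 ≤ f₂ x)
    (hf₁ : P.map X₁ = volume.withDensity fun x => ENNReal.ofReal (f₁ x))
    (hf₂ : P.map X₂ = volume.withDensity fun x => ENNReal.ofReal (f₂ x)) :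
    ∫ ω, |X₁ ω - X₂ ω| ∂P
      = ∫ x, x * (2 * f₁ x * condCDF (P.map (fun ω => (X₁ ω, X₂ ω))) x x
          + 2 * f₂ x * condCDF ((P.map (fun ω => (X₁ ω, X₂ ω))).map Prod.swap) x x
          - f₁ x - f₂ x) := by
  have hpair : Measurable fun ω => (X₁ ω, X₂ ω) := hm₁.prodMk hm₂
  set ρ : Measure (ℝ × ℝ) := P.map (fun ω => (X₁ ω, X₂ ω)) with hρ
  set ρ' : Measure (ℝ × ℝ) := ρ.map Prod.swap with hρ'
  haveI : IsProbabilityMeasure ρ := Measure.isProbabilityMeasure_map hpair.aemeasurable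
  haveI : IsProbabilityMeasure ρ' :=
    Measure.isProbabilityMeasure_map measurable_swap.aemeasurable
  have hfst : ρ.fst = P.map X₁ := Measure.fst_map_prodMk hm₂
  have hsnd : ρ.snd = P.map X₂ := Measure.snd_map_prodMk hm₁
  have hfst' : ρ'.fst = P.map X₂ := by rw [hρ', Measure.fst_map_swap, hsnd]
  have hac' : ρ' ≪ (volume : Measure (ℝ × ℝ)) := by
    have h := hac.map (f := Prod.swap) measurable_swap
    have hvol : (volume : Measure (ℝ × ℝ)).map Prod.swap = volume := by
      rw [Measure.volume_eq_prod]
      exact Measure.measurePreserving_swap.map_eq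
    rwa [hvol] at h
  -- integrability of coordinates w.r.t. ρ and ρ'
  have hip1 : Integrable (fun p : ℝ × ℝ => p.1) ρ := by
    rw [hρ]
    exact (integrable_map_measure measurable_fst.aestronglyMeasurable
      hpair.aemeasurable).mpr hi₁
  have hip2 : Integrable (fun p : ℝ × ℝ => p.2) ρ := by
    rw [hρ]
    exact (integrable_map_measure measurable_snd.aestronglyMeasurable
      hpair.aemeasurable).mpr hi₂
  have hip1' : Integrable (fun p : ℝ × ℝ => p.1) ρ' := by
    rw [hρ']
    exact (integrable_map_measure measurable_fst.aestronglyMeasurable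
      measurable_swap.aemeasurable).mpr hip2
  -- the two indicator functions
  set g₁ : ℝ × ℝ → ℝ := fun p => ({p : ℝ × ℝ | p.2 ≤ p.1}).indicator (fun p => p.1) p
    with hg₁
  set g₂ : ℝ × ℝ → ℝ := fun p => ({p : ℝ × ℝ | p.1 < p.2}).indicator (fun p => p.2) p
    with hg₂
  have hg₁int : Integrable g₁ ρ :=
    hip1.indicator (measurableSet_le measurable_snd measurable_fst)
  have hg₂int : Integrable g₂ ρ :=
    hip2.indicator (measurableSet_lt measurable_fst measurable_snd)
  -- pointwise identity
  have hpt : ∀ p : ℝ × ℝ, |p.1 - p.2| = 2 * g₁ p + 2 * g₂ p - p.1 - p.2 := by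
    intro p
    by_cases h : p.2 ≤ p.1
    · have h' : ¬ p.1 < p.2 := not_lt.2 h
      rw [hg₁, hg₂]
      simp only [Set.indicator, Set.mem_setOf_eq, h, h', if_true, if_false]
      rw [abs_of_nonneg (sub_nonneg.2 h)]
      ring
    · have h' : p.1 < p.2 := not_le.1 h
      rw [hg₁, hg₂]
      simp only [Set.indicator, Set.mem_setOf_eq, h, h', if_true, if_false]
      rw [abs_of_neg (sub_neg.2 h')]
      ring
  -- LHS to ρ
  have hL : ∫ ω, |X₁ ω - X₂ ω| ∂P = ∫ p : ℝ × ℝ, |p.1 - p.2| ∂ρ := by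
    rw [hρ, integral_map hpair.aemeasurable]
    exact ((measurable_fst.sub measurable_snd).abs).aestronglyMeasurable
  -- split the integral
  have hsplit : ∫ p : ℝ × ℝ, |p.1 - p.2| ∂ρ
      = 2 * ∫ p, g₁ p ∂ρ + 2 * ∫ p, g₂ p ∂ρ - ∫ p : ℝ × ℝ, p.1 ∂ρ
        - ∫ p : ℝ × ℝ, p.2 ∂ρ := by
    rw [show (fun p : ℝ × ℝ => |p.1 - p.2|)
        = fun p => 2 * g₁ p + 2 * g₂ p - p.1 - p.2 from funext hpt]
    have e3 : Integrable (fun p : ℝ × ℝ => 2 * g₁ p + 2 * g₂ p) ρ :=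
      (hg₁int.const_mul 2).add (hg₂int.const_mul 2)
    have e1 : Integrable (fun p : ℝ × ℝ => 2 * g₁ p + 2 * g₂ p - p.1) ρ := e3.sub hip1
    rw [integral_sub e1 hip2, integral_sub e3 hip1,
      integral_add (hg₁int.const_mul 2) (hg₂int.const_mul 2),
      integral_const_mul, integral_const_mul]
  -- g₂ via swap
  have hg₂eq : ∫ p, g₂ p ∂ρ
      = ∫ p, ({p : ℝ × ℝ | p.2 < p.1}).indicator (fun p => p.1) p ∂ρ' := by
    have hfun : (fun p : ℝ × ℝ =>
        ({p : ℝ × ℝ | p.2 < p.1}).indicator (fun p => p.1) (Prod.swap p)) = g₂ := by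
      funext p
      rw [hg₂]
      by_cases h : p.1 < p.2
      · simp [Set.indicator, h, Prod.swap]
      · simp [Set.indicator, h, Prod.swap]
    rw [hρ', integral_map measurable_swap.aemeasurable
      ((measurable_fst.indicator
        (measurableSet_lt measurable_snd measurable_fst)).aestronglyMeasurable)]
    rw [show (fun p : ℝ × ℝ =>
        ({p : ℝ × ℝ | p.2 < p.1}).indicator (fun p => p.1) (Prod.swap p)) = g₂ from hfun]
  have hB₁ : ∫ p, g₁ p ∂ρ = ∫ a, a * condCDF ρ a a ∂ρ.fst :=
    integral_indicator_le_diag ρ hip1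
  have hB₂ : ∫ p, g₂ p ∂ρ = ∫ a, a * condCDF ρ' a a ∂ρ'.fst := by
    rw [hg₂eq]
    exact integral_indicator_lt_diag ρ' hac' hip1'
  -- withDensity transfers
  have hw₁ : ∀ g : ℝ → ℝ, ∫ x, g x ∂(P.map X₁) = ∫ x, f₁ x * g x := by
    intro g
    rw [hf₁]
    rw [show (fun x => ENNReal.ofReal (f₁ x))
        = fun x => (((fun x => (f₁ x).toNNReal) x : ℝ≥0) : ℝ≥0∞) from rfl]
    rw [integral_withDensity_eq_integral_smul hf₁meas.real_toNNReal]
    congr 1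
    funext x
    rw [NNReal.smul_def, Real.coe_toNNReal _ (hf₁nonneg x), smul_eq_mul]
  have hw₂ : ∀ g : ℝ → ℝ, ∫ x, g x ∂(P.map X₂) = ∫ x, f₂ x * g x := by
    intro g
    rw [hf₂]
    rw [show (fun x => ENNReal.ofReal (f₂ x))
        = fun x => (((fun x => (f₂ x).toNNReal) x : ℝ≥0) : ℝ≥0∞) from rfl]
    rw [integral_withDensity_eq_integral_smul hf₂meas.real_toNNReal]
    congr 1
    funext x
    rw [NNReal.smul_def, Real.coe_toNNReal _ (hf₂nonneg x), smul_eq_mul]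
  have hA : ∫ a, a * condCDF ρ a a ∂ρ.fst = ∫ x, f₁ x * (x * condCDF ρ x x) := by
    rw [hfst, hw₁]
  have hBB : ∫ a, a * condCDF ρ' a a ∂ρ'.fst
      = ∫ x, f₂ x * (x * condCDF ρ' x x) := by
    rw [hfst', hw₂]
  have hC : ∫ p : ℝ × ℝ, p.1 ∂ρ = ∫ x, f₁ x * x := by
    rw [hρ, integral_map hpair.aemeasurable measurable_fst.aestronglyMeasurable]
    have : ∫ ω, X₁ ω ∂P = ∫ x, id x ∂(P.map X₁) := by
      rw [integral_map hm₁.aemeasurable measurable_id.aestronglyMeasurable]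
      rfl
    rw [show (fun ω => (X₁ ω, X₂ ω).1) = X₁ from rfl, this, hw₁]
    simp [id]
  have hD : ∫ p : ℝ × ℝ, p.2 ∂ρ = ∫ x, f₂ x * x := by
    rw [hρ, integral_map hpair.aemeasurable measurable_snd.aestronglyMeasurable]
    have : ∫ ω, X₂ ω ∂P = ∫ x, id x ∂(P.map X₂) := by
      rw [integral_map hm₂.aemeasurable measurable_id.aestronglyMeasurable]
      rfl
    rw [show (fun ω => (X₁ ω, X₂ ω).2) = X₂ from rfl, this, hw₂]
    simp [id]
  -- integrability w.r.t. volume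
  have hI₁ : Integrable (fun x => f₁ x * x) (volume : Measure ℝ) := by
    have h0 : Integrable (id : ℝ → ℝ) (P.map X₁) :=
      (integrable_map_measure measurable_id.aestronglyMeasurable hm₁.aemeasurable).mpr hi₁
    rw [hf₁] at h0
    rw [show (fun x => ENNReal.ofReal (f₁ x))
        = fun x => (((fun x => (f₁ x).toNNReal) x : ℝ≥0) : ℝ≥0∞) from rfl] at h0
    have := (integrable_withDensity_iff_integrable_smul hf₁meas.real_toNNReal).mp h0
    refine this.congr (Eventually.of_forall fun x => ?_)
    show (f₁ x).toNNReal • (x : ℝ) = f₁ x * x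
    rw [NNReal.smul_def, Real.coe_toNNReal _ (hf₁nonneg x), smul_eq_mul]
  have hI₂ : Integrable (fun x => f₂ x * x) (volume : Measure ℝ) := by
    have h0 : Integrable (id : ℝ → ℝ) (P.map X₂) :=
      (integrable_map_measure measurable_id.aestronglyMeasurable hm₂.aemeasurable).mpr hi₂
    rw [hf₂] at h0
    rw [show (fun x => ENNReal.ofReal (f₂ x))
        = fun x => (((fun x => (f₂ x).toNNReal) x : ℝ≥0) : ℝ≥0∞) from rfl] at h0
    have := (integrable_withDensity_iff_integrable_smul hf₂meas.real_toNNReal).mp h0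
    refine this.congr (Eventually.of_forall fun x => ?_)
    show (f₂ x).toNNReal • (x : ℝ) = f₂ x * x
    rw [NNReal.smul_def, Real.coe_toNNReal _ (hf₂nonneg x), smul_eq_mul]
  have bound : ∀ (f : ℝ → ℝ) (σ : Measure (ℝ × ℝ)), (∀ x, 0 ≤ f x) →
      ∀ x : ℝ, ‖f x * (x * condCDF σ x x)‖ ≤ |f x * x| := by
    intro f σ hf x
    rw [show |f x * x| = ‖f x * x‖ from rfl]
    rw [norm_mul, norm_mul, norm_mul]
    refine mul_le_mul_of_nonneg_left ?_ (norm_nonneg _)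
    calc ‖x‖ * ‖condCDF σ x x‖ ≤ ‖x‖ * 1 := by
          refine mul_le_mul_of_nonneg_left ?_ (norm_nonneg _)
          rw [Real.norm_eq_abs, abs_of_nonneg (condCDF_nonneg σ x x)]
          exact condCDF_le_one σ x x
      _ = ‖x‖ := mul_one _
  have hI₁π : Integrable (fun x => f₁ x * (x * condCDF ρ x x)) (volume : Measure ℝ) :=
    hI₁.abs.mono' ((hf₁meas.mul (measurable_id.mul
      (measurable_condCDF_diag ρ))).aestronglyMeasurable)
      (Eventually.of_forall (bound f₁ ρ hf₁nonneg))
  have hI₂π : Integrable (fun x => f₂ x * (x * condCDF ρ' x x)) (volume : Measure ℝ) :=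
    hI₂.abs.mono' ((hf₂meas.mul (measurable_id.mul
      (measurable_condCDF_diag ρ'))).aestronglyMeasurable)
      (Eventually.of_forall (bound f₂ ρ' hf₂nonneg))
  -- RHS split
  have hR : ∫ x, x * (2 * f₁ x * condCDF ρ x x + 2 * f₂ x * condCDF ρ' x x
        - f₁ x - f₂ x)
      = 2 * (∫ x, f₁ x * (x * condCDF ρ x x)) + 2 * (∫ x, f₂ x * (x * condCDF ρ' x x))
        - (∫ x, f₁ x * x) - ∫ x, f₂ x * x := by
    rw [show (fun x => x * (2 * f₁ x * condCDF ρ x x + 2 * f₂ x * condCDF ρ' x x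
        - f₁ x - f₂ x))
        = fun x => 2 * (f₁ x * (x * condCDF ρ x x)) + 2 * (f₂ x * (x * condCDF ρ' x x))
          - f₁ x * x - f₂ x * x from funext fun x => by ring]
    have e3 : Integrable (fun x => 2 * (f₁ x * (x * condCDF ρ x x))
        + 2 * (f₂ x * (x * condCDF ρ' x x))) (volume : Measure ℝ) :=
      (hI₁π.const_mul 2).add (hI₂π.const_mul 2)
    have e1 : Integrable (fun x => 2 * (f₁ x * (x * condCDF ρ x x))
        + 2 * (f₂ x * (x * condCDF ρ' x x)) - f₁ x * x) (volume : Measure ℝ) := e3.sub hI₁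
    rw [integral_sub e1 hI₂, integral_sub e3 hI₁,
      integral_add (hI₁π.const_mul 2) (hI₂π.const_mul 2),
      integral_const_mul, integral_const_mul]
  rw [hL, hsplit, hB₁, hB₂, hA, hBB, hC, hD, hR]
end

section
/- Let Z₁ and Z₂ be independent standard normal random variables (each with law gaussianReal 0 1) on a common probability space, let μ ∈ ℝ, σ > 0, and ρ ∈ [−1, 1], and define X = μ + σ·Z₁ and Y = μ + σ·(ρ·Z₁ + √(1 − ρ²)·Z₂) (so (X, Y) is bivariate normal with common mean μ, common variance σ², and correlation ρ). Then E[|X − Y|] = (2/√π)·σ·√(1 − ρ). -/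
open MeasureTheory ProbabilityTheory Real Set
open scoped ENNReal NNReal

lemma aux_integral_Ioi : ∫ x in Ioi (0:ℝ), x * rexp (-x^2/2) = 1 := by
  have hderiv : ∀ x ∈ Ici (0:ℝ), HasDerivAt (fun x : ℝ => -rexp (-x^2/2)) (x * rexp (-x^2/2)) x := by
    intro x _
    have h : HasDerivAt (fun x : ℝ => -x^2/2) (-x) x := by
      have : HasDerivAt (fun x : ℝ => -x^2/2) (-(((2:ℕ):ℝ) * x ^ (2 - 1)) / 2) x :=
        ((hasDerivAt_pow 2 x).neg.div_const 2)
      convert this using 1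
      · push_cast; ring
    have : HasDerivAt (fun x : ℝ => -rexp (-x^2/2)) (-(rexp (-x^2/2) * -x)) x := (h.exp).neg
    convert this using 1
    ring
  have hint : IntegrableOn (fun x : ℝ => x * rexp (-x^2/2)) (Ioi 0) := by
    have := (integrable_mul_exp_neg_mul_sq (by norm_num : (0:ℝ) < 1/2)).integrableOn (s := Ioi 0)
    refine this.congr_fun (fun x _ => by ring_nf) measurableSet_Ioi
  have htend : Filter.Tendsto (fun x : ℝ => -rexp (-x^2/2)) Filter.atTop (nhds 0) := by
    rw [show (0:ℝ) = -0 by ring]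
    refine Filter.Tendsto.neg ?_
    have h2 : Filter.Tendsto (fun x : ℝ => -x^2/2) Filter.atTop Filter.atBot :=
      ((Filter.tendsto_pow_atTop (two_ne_zero)).const_mul_atTop_of_neg
        (by norm_num : (-(1:ℝ)/2) < 0)).congr (fun x => by ring)
    exact Real.tendsto_exp_atBot.comp h2
  have := integral_Ioi_of_hasDerivAt_of_tendsto' hderiv hint htend
  simpa using this

lemma aux_abs_integral : ∫ x : ℝ, |x| * rexp (-x^2/2) = 2 := by
  have h : ∀ x : ℝ, |x| * rexp (-x^2/2) = (fun t : ℝ => t * rexp (-t^2/2)) |x| := by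
    intro x; simp [sq_abs]
  calc ∫ x : ℝ, |x| * rexp (-x^2/2) = ∫ x : ℝ, (fun t : ℝ => t * rexp (-t^2/2)) |x| := by
        simp_rw [h]
    _ = 2 * ∫ x in Ioi (0:ℝ), x * rexp (-x^2/2) :=
        integral_comp_abs (f := fun t : ℝ => t * rexp (-t^2/2))
    _ = 2 := by rw [aux_integral_Ioi, mul_one]

lemma aux_integrable_abs_gauss : Integrable (fun x : ℝ => |x| * rexp (-x^2/2)) := by
  have h := (integrable_mul_exp_neg_mul_sq (by norm_num : (0:ℝ) < 1/2)).abs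
  refine h.congr (Filter.Eventually.of_forall fun x => ?_)
  show |x * rexp (-(1/2) * x^2)| = |x| * rexp (-x^2/2)
  rw [abs_mul, abs_of_pos (Real.exp_pos _)]
  ring_nf

noncomputable def auxL (p q s t : ℝ) : (ℝ×ℝ) →ₗ[ℝ] (ℝ×ℝ) :=
  LinearMap.prod (p • LinearMap.fst ℝ ℝ ℝ + q • LinearMap.snd ℝ ℝ ℝ)
                 (s • LinearMap.fst ℝ ℝ ℝ + t • LinearMap.snd ℝ ℝ ℝ)

lemma auxL_apply (p q s t x y : ℝ) : auxL p q s t (x, y) = (p*x+q*y, s*x+t*y) := by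
  simp [auxL, mul_comm]

lemma auxL_det (p q s t : ℝ) : LinearMap.det (auxL p q s t) = p*t - q*s := by
  rw [← LinearMap.det_toMatrix (Module.Basis.finTwoProd ℝ)]
  have hM : (LinearMap.toMatrix (Module.Basis.finTwoProd ℝ) (Module.Basis.finTwoProd ℝ) (auxL p q s t)) =
      !![p, q; s, t] := by
    ext i j
    fin_cases j <;> fin_cases i <;>
      simp [LinearMap.toMatrix_apply, Module.Basis.finTwoProd_zero, Module.Basis.finTwoProd_one,
        auxL_apply, Module.Basis.coe_finTwoProd_repr]
  rw [hM, Matrix.det_fin_two_of]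

lemma auxL_map_volume {p q s t : ℝ} (h : p*t - q*s = 1) :
    Measure.map (auxL p q s t) volume = volume := by
  have hdet : LinearMap.det (auxL p q s t) = 1 := by rw [auxL_det, h]
  rw [Measure.map_linearMap_addHaar_eq_smul_addHaar volume (by rw [hdet]; norm_num), hdet]
  simp

lemma aux_pdf_rot {u v x y : ℝ} (h : x^2 + y^2 = u^2 + v^2) :
    gaussianPDFReal 0 1 x * gaussianPDFReal 0 1 y
      = gaussianPDFReal 0 1 u * gaussianPDFReal 0 1 v := by
  simp only [gaussianPDFReal, sub_zero, NNReal.coe_one, mul_one]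
  rw [mul_mul_mul_comm, ← Real.exp_add, mul_mul_mul_comm, ← Real.exp_add]
  congr 2
  linarith

/-- For a bivariate normal pair `X = μ + σ Z₁`, `Y = μ + σ(ρ Z₁ + √(1−ρ²) Z₂)` built from
independent standard normals `Z₁, Z₂`, one has `E|X − Y| = (2/√π) σ √(1 − ρ)`. -/
theorem bivariate_normal_abs_diff
    {Ω : Type*} [MeasurableSpace Ω] (P : Measure Ω) [IsProbabilityMeasure P]
    (Z₁ Z₂ : Ω → ℝ) (hm₁ : Measurable Z₁) (hm₂ : Measurable Z₂)
    (hZ₁ : P.map Z₁ = gaussianReal 0 1) (hZ₂ : P.map Z₂ = gaussianReal 0 1)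
    (hind : IndepFun Z₁ Z₂ P)
    (μ σ ρ : ℝ) (hσ : 0 < σ) (hρ : ρ ∈ Set.Icc (-1 : ℝ) 1) :
    ∫ ω, |(μ + σ * Z₁ ω)
        - (μ + σ * (ρ * Z₁ ω + Real.sqrt (1 - ρ ^ 2) * Z₂ ω))| ∂P
      = (2 / Real.sqrt Real.pi) * σ * Real.sqrt (1 - ρ) := by
  obtain ⟨hρl, hρu⟩ := hρ
  rcases eq_or_lt_of_le hρu with hρ1 | hρ1
  · subst hρ1
    norm_num
  -- notation
  set a : ℝ := 1 - ρ with ha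
  set b : ℝ := Real.sqrt (1 - ρ^2) with hb
  set r : ℝ := Real.sqrt (2 * (1 - ρ)) with hr
  have h1ρ : (0:ℝ) < 1 - ρ := by linarith
  have h1ρ2 : (0:ℝ) ≤ 1 - ρ^2 := by nlinarith
  have hb2 : b^2 = 1 - ρ^2 := Real.sq_sqrt h1ρ2
  have hr0 : 0 < r := Real.sqrt_pos.mpr (by linarith)
  have hr2 : r^2 = a^2 + b^2 := by
    rw [hr, Real.sq_sqrt (by linarith), hb2, ha]; ring
  -- pointwise simplification of the integrand
  have hptr : ∀ ω, |(μ + σ * Z₁ ω) - (μ + σ * (ρ * Z₁ ω + b * Z₂ ω))|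
      = σ * |a * Z₁ ω - b * Z₂ ω| := by
    intro ω
    rw [show (μ + σ * Z₁ ω) - (μ + σ * (ρ * Z₁ ω + b * Z₂ ω))
        = σ * (a * Z₁ ω - b * Z₂ ω) by ring, abs_mul, abs_of_pos hσ]
  -- measures and densities
  set γ : Measure ℝ := gaussianReal 0 1 with hγdef
  have hγ : γ = volume.withDensity (gaussianPDF 0 1) :=
    gaussianReal_of_var_ne_zero 0 one_ne_zero
  set g : ℝ → ℝ≥0∞ := gaussianPDF 0 1 with hgdef
  have hgmeas : Measurable g := measurable_gaussianPDF 0 1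
  have hg1 : ∫⁻ x, g x = 1 := lintegral_gaussianPDF_eq_one 0 one_ne_zero
  have hgtop : ∀ x, g x ≠ ⊤ := fun x => ENNReal.ofReal_ne_top
  -- joint law
  have hpair : P.map (fun ω => (Z₁ ω, Z₂ ω)) = γ.prod γ := by
    have := (indepFun_iff_map_prod_eq_prod_map_map hm₁.aemeasurable hm₂.aemeasurable).mp hind
    rwa [hZ₁, hZ₂] at this
  -- the function on ℝ²
  set f : ℝ × ℝ → ℝ≥0∞ := fun p => ENNReal.ofReal (σ * |a * p.1 - b * p.2|) with hfdef
  have hfmeas : Measurable f := by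
    apply ENNReal.measurable_ofReal.comp
    fun_prop
  -- rotation
  set L : (ℝ×ℝ) →ₗ[ℝ] (ℝ×ℝ) := auxL (a/r) (b/r) (-b/r) (a/r) with hL
  have hLdet : (a/r)*(a/r) - (b/r)*(-b/r) = 1 := by
    field_simp
    linarith [hr2]
  have hLmap : Measure.map L volume = volume := auxL_map_volume hLdet
  have hLmeas : Measurable L := L.continuous_of_finiteDimensional.measurable
  -- the product-density integrand
  set G : ℝ × ℝ → ℝ≥0∞ := fun p => (g p.1 * g p.2) * f p with hGdef
  have hGmeas : Measurable G :=
    (((hgmeas.comp measurable_fst).mul (hgmeas.comp measurable_snd)).mul hfmeas)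
  -- rotate pointwise
  have hrot : ∀ p : ℝ × ℝ, G (L p) = (g p.1 * g p.2) * ENNReal.ofReal (σ * (r * |p.1|)) := by
    intro p
    have hLp : L p = ((a/r)*p.1+(b/r)*p.2, (-b/r)*p.1+(a/r)*p.2) := by
      rw [hL, ← Prod.mk.eta (p := p), auxL_apply]
    rw [hGdef]
    simp only [hLp]
    have h1 : a * ((a/r)*p.1+(b/r)*p.2) - b * ((-b/r)*p.1+(a/r)*p.2) = r * p.1 := by
      have e1 : a * ((a/r)*p.1+(b/r)*p.2) - b * ((-b/r)*p.1+(a/r)*p.2)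
          = (a^2+b^2)/r * p.1 := by ring
      rw [e1, ← hr2, sq, mul_div_assoc, div_self hr0.ne', mul_one]
    have h2 : ((a/r)*p.1+(b/r)*p.2)^2 + ((-b/r)*p.1+(a/r)*p.2)^2 = p.1^2 + p.2^2 := by
      have e2 : ((a/r)*p.1+(b/r)*p.2)^2 + ((-b/r)*p.1+(a/r)*p.2)^2
          = (a^2+b^2) * (p.1^2 + p.2^2) / r^2 := by ring
      rw [e2, ← hr2, mul_div_cancel_left₀ _ (pow_ne_zero 2 hr0.ne')]
    have h3 : g ((a/r)*p.1+(b/r)*p.2) * g ((-b/r)*p.1+(a/r)*p.2) = g p.1 * g p.2 := by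
      rw [hgdef]
      simp only [gaussianPDF]
      rw [← ENNReal.ofReal_mul (gaussianPDFReal_nonneg _ _ _),
        ← ENNReal.ofReal_mul (gaussianPDFReal_nonneg _ _ _), aux_pdf_rot h2]
    rw [h3, hfdef]
    simp only
    rw [h1, abs_mul, abs_of_pos hr0, mul_assoc]
  -- integrability of the final real integrand
  have hint : Integrable (fun x : ℝ => gaussianPDFReal 0 1 x * (σ * (r * |x|))) := by
    have := (aux_integrable_abs_gauss.const_mul (σ * r * (Real.sqrt (2*π))⁻¹))
    refine this.congr (Filter.Eventually.of_forall fun x => ?_)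
    simp only [gaussianPDFReal, sub_zero, NNReal.coe_one, mul_one]
    ring
  -- main computation
  have key : ∫⁻ ω, ENNReal.ofReal (|(μ + σ * Z₁ ω)
        - (μ + σ * (ρ * Z₁ ω + b * Z₂ ω))|) ∂P
      = ENNReal.ofReal (∫ x, gaussianPDFReal 0 1 x * (σ * (r * |x|))) := by
    calc ∫⁻ ω, ENNReal.ofReal (|(μ + σ * Z₁ ω) - (μ + σ * (ρ * Z₁ ω + b * Z₂ ω))|) ∂P
        = ∫⁻ ω, f (Z₁ ω, Z₂ ω) ∂P := by
          refine lintegral_congr fun ω => ?_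
          rw [hptr ω]
      _ = ∫⁻ p, f p ∂(γ.prod γ) := by
          rw [← hpair, lintegral_map hfmeas (hm₁.prodMk hm₂)]
      _ = ∫⁻ x, ∫⁻ y, f (x, y) ∂γ ∂γ := lintegral_prod f hfmeas.aemeasurable
      _ = ∫⁻ x, ∫⁻ y, g y * f (x, y) ∂volume ∂γ := by
          refine lintegral_congr fun x => ?_
          rw [hγ, lintegral_withDensity_eq_lintegral_mul volume hgmeas (by fun_prop)]
          rfl
      _ = ∫⁻ x, g x * ∫⁻ y, g y * f (x, y) ∂volume ∂volume := by
          have houter : Measurable fun x : ℝ => ∫⁻ y, g y * f (x, y) :=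
            Measurable.lintegral_prod_right ((hgmeas.comp measurable_snd).mul hfmeas)
          rw [hγ, lintegral_withDensity_eq_lintegral_mul volume hgmeas houter]
          rfl
      _ = ∫⁻ x, ∫⁻ y, G (x, y) ∂volume ∂volume := by
          refine lintegral_congr fun x => ?_
          rw [← lintegral_const_mul' _ _ (hgtop x)]
          refine lintegral_congr fun y => ?_
          rw [hGdef]; simp only; ring
      _ = ∫⁻ p, G p ∂((volume : Measure ℝ).prod volume) :=
          (lintegral_prod G hGmeas.aemeasurable).symm
      _ = ∫⁻ p, G p ∂(volume : Measure (ℝ × ℝ)) := by rw [← Measure.volume_eq_prod]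
      _ = ∫⁻ p, G (L p) ∂(volume : Measure (ℝ × ℝ)) := by
          conv_lhs => rw [← hLmap]
          rw [lintegral_map hGmeas hLmeas]
      _ = ∫⁻ p, (g p.1 * g p.2) * ENNReal.ofReal (σ * (r * |p.1|))
            ∂(volume : Measure (ℝ × ℝ)) := lintegral_congr hrot
      _ = ∫⁻ x, ∫⁻ y, (g x * g y) * ENNReal.ofReal (σ * (r * |x|)) ∂volume ∂volume := by
          rw [Measure.volume_eq_prod]
          exact lintegral_prod _ (by fun_prop)
      _ = ∫⁻ x, g x * ENNReal.ofReal (σ * (r * |x|)) ∂volume := by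
          refine lintegral_congr fun x => ?_
          have : ∀ y : ℝ, (g x * g y) * ENNReal.ofReal (σ * (r * |x|))
              = (g x * ENNReal.ofReal (σ * (r * |x|))) * g y := fun y => by ring
          simp_rw [this]
          rw [lintegral_const_mul' _ _ (ENNReal.mul_ne_top (hgtop x) ENNReal.ofReal_ne_top),
            hg1, mul_one]
      _ = ∫⁻ x, ENNReal.ofReal (gaussianPDFReal 0 1 x * (σ * (r * |x|))) ∂volume := by
          refine lintegral_congr fun x => ?_
          rw [hgdef]
          simp only [gaussianPDF]
          rw [← ENNReal.ofReal_mul (gaussianPDFReal_nonneg _ _ _)]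
      _ = ENNReal.ofReal (∫ x, gaussianPDFReal 0 1 x * (σ * (r * |x|))) := by
          rw [ofReal_integral_eq_lintegral_ofReal hint]
          exact Filter.Eventually.of_forall fun x =>
            mul_nonneg (gaussianPDFReal_nonneg _ _ _)
              (by positivity)
  -- evaluate the real integral
  have hreal : ∫ x, gaussianPDFReal 0 1 x * (σ * (r * |x|))
      = (2 / Real.sqrt π) * σ * Real.sqrt (1 - ρ) := by
    have hptw : ∀ x : ℝ, gaussianPDFReal 0 1 x * (σ * (r * |x|))
        = (σ * r * (Real.sqrt (2*π))⁻¹) * (|x| * rexp (-x^2/2)) := by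
      intro x
      simp only [gaussianPDFReal, sub_zero, NNReal.coe_one, mul_one]
      ring
    simp_rw [hptw]
    rw [integral_const_mul, aux_abs_integral]
    have hsp : Real.sqrt (2*π) = Real.sqrt 2 * Real.sqrt π := Real.sqrt_mul (by norm_num) _
    have hrs : r = Real.sqrt 2 * Real.sqrt (1-ρ) := by
      rw [hr, Real.sqrt_mul (by norm_num)]
    have h2pos : (0:ℝ) < Real.sqrt 2 := Real.sqrt_pos.mpr (by norm_num)
    have hπpos : (0:ℝ) < Real.sqrt π := Real.sqrt_pos.mpr Real.pi_pos
    rw [hsp, hrs]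
    field_simp
  -- conclude
  have hmor : Measurable fun ω => |(μ + σ * Z₁ ω) - (μ + σ * (ρ * Z₁ ω + b * Z₂ ω))| := by
    apply Measurable.abs
    fun_prop
  rw [integral_eq_lintegral_of_nonneg_ae
      (Filter.Eventually.of_forall fun ω => abs_nonneg _)
      hmor.aestronglyMeasurable]
  rw [key, hreal, ENNReal.toReal_ofReal]
  positivity
end

section
/- Let n ≥ 2, let Z₀, Z₁, …, Zₙ be independent standard normal random variables (each with law gaussianReal 0 1) on a common probability space, let μ ∈ ℝ, σ > 0 and ρ ∈ [0, 1], and define Xᵢ = μ + σ·(√ρ·Z₀ + √(1 − ρ)·Zᵢ) for i = 1,…,n (an exchangeable multivariate normal vector with common mean μ, common variance σ², and common pairwise correlation ρ). Then the Gini mean difference satisfies GMDₙ = (2/√π)·σ·√(1 − ρ). -/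
open MeasureTheory ProbabilityTheory Real

namespace GMDAux

open Set

lemma integrable_mul_exp_quarter : Integrable (fun u : ℝ => u * Real.exp (-(1/4 : ℝ) * u ^ 2)) := by
  simpa using integrable_rpow_mul_exp_neg_mul_sq (by norm_num : (0:ℝ) < 1/4) (s := 1)

lemma integrable_abs_mul_exp_quarter :
    Integrable (fun u : ℝ => |u| * Real.exp (-(1/4 : ℝ) * u ^ 2)) := by
  have := integrable_mul_exp_quarter.abs
  refine this.congr (Filter.Eventually.of_forall fun u => ?_)
  simp only [abs_mul, abs_of_nonneg (Real.exp_pos _).le]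

lemma integral_Ioi_mul_exp_quarter :
    ∫ u in Ioi (0:ℝ), u * Real.exp (-(1/4 : ℝ) * u ^ 2) = 2 := by
  have hderiv : ∀ x ∈ Ici (0:ℝ), HasDerivAt (fun u : ℝ => -2 * Real.exp (-(1/4 : ℝ) * u ^ 2))
      (x * Real.exp (-(1/4 : ℝ) * x ^ 2)) x := by
    intro x _
    have h := (((hasDerivAt_pow 2 x).const_mul (-(1/4 : ℝ))).exp).const_mul (-2 : ℝ)
    convert h using 1
    iterate 2 rfl
    simp
    ring
  have htend : Filter.Tendsto (fun u : ℝ => -2 * Real.exp (-(1/4 : ℝ) * u ^ 2))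
      Filter.atTop (nhds 0) := by
    rw [show (0:ℝ) = -2 * 0 by ring]
    refine Filter.Tendsto.const_mul _ ?_
    refine Real.tendsto_exp_atBot.comp ?_
    have : Filter.Tendsto (fun u : ℝ => u ^ 2) Filter.atTop Filter.atTop :=
      Filter.tendsto_pow_atTop two_ne_zero
    exact this.const_mul_atTop_of_neg (by norm_num)
  have := integral_Ioi_of_hasDerivAt_of_tendsto' hderiv
    integrable_mul_exp_quarter.integrableOn htend
  rw [this]
  norm_num

lemma integral_abs_mul_exp_quarter :
    ∫ u : ℝ, |u| * Real.exp (-(1/4 : ℝ) * u ^ 2) = 4 := by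
  have h : ∀ u : ℝ, |u| * Real.exp (-(1/4 : ℝ) * u ^ 2)
      = (fun t : ℝ => t * Real.exp (-(1/4 : ℝ) * t ^ 2)) |u| := by
    intro u; simp [sq_abs]
  rw [integral_congr_ae (Filter.Eventually.of_forall h),
    integral_comp_abs (f := fun t : ℝ => t * Real.exp (-(1/4 : ℝ) * t ^ 2)),
    integral_Ioi_mul_exp_quarter]
  norm_num

lemma gaussianPDFReal_mul (u x : ℝ) :
    gaussianPDFReal 0 1 x * gaussianPDFReal 0 1 (x - u)
      = ((2 * π)⁻¹ * Real.exp (-(1/4 : ℝ) * u ^ 2)) * Real.exp (-((x - u/2) ^ 2)) := by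
  unfold gaussianPDFReal
  simp only [NNReal.coe_one, mul_one, sub_zero]
  rw [mul_mul_mul_comm, ← Real.exp_add, mul_assoc ((2 * π)⁻¹), ← Real.exp_add,
    ← mul_inv, Real.mul_self_sqrt (by positivity)]
  congr 1
  ring

lemma lintegral_gaussianPDF_mul (u : ℝ) :
    ∫⁻ x, gaussianPDF 0 1 x * gaussianPDF 0 1 (x - u)
      = ENNReal.ofReal ((2 * π)⁻¹ * Real.sqrt π * Real.exp (-(1/4 : ℝ) * u ^ 2)) := by
  have h : ∀ x : ℝ, gaussianPDF 0 1 x * gaussianPDF 0 1 (x - u)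
      = ENNReal.ofReal (((2 * π)⁻¹ * Real.exp (-(1/4 : ℝ) * u ^ 2))
          * Real.exp (-1 * (x - u/2) ^ 2)) := by
    intro x
    rw [gaussianPDF, gaussianPDF, ← ENNReal.ofReal_mul (gaussianPDFReal_nonneg _ _ _),
      gaussianPDFReal_mul]
    norm_num
  simp_rw [h]
  rw [← ofReal_integral_eq_lintegral_ofReal
    (((integrable_exp_neg_mul_sq one_pos).comp_sub_right (u/2)).const_mul _)
    (Filter.Eventually.of_forall fun x => by positivity)]
  rw [integral_const_mul,
    integral_sub_right_eq_self (μ := volume) (fun a : ℝ => Real.exp (-1 * a ^ 2)) (u/2),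
    integral_gaussian, show Real.sqrt (π / 1) = Real.sqrt π by norm_num]
  congr 1
  ring

lemma core :
    ∫ p : ℝ × ℝ, |p.1 - p.2| ∂((gaussianReal 0 1).prod (gaussianReal 0 1))
      = 2 / Real.sqrt π := by
  have hγ : gaussianReal 0 1 = volume.withDensity (gaussianPDF 0 1) :=
    gaussianReal_of_var_ne_zero 0 one_ne_zero
  have hmf : Measurable fun p : ℝ × ℝ => |p.1 - p.2| := (measurable_fst.sub measurable_snd).abs
  have hD := measurable_gaussianPDF 0 1
  rw [integral_eq_lintegral_of_nonneg_ae (Filter.Eventually.of_forall fun p => abs_nonneg _)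
    hmf.aestronglyMeasurable]
  have hmm : ∀ x : ℝ, Measurable fun u : ℝ => gaussianPDF 0 1 (x - u) * ENNReal.ofReal |u| :=
    fun x => (hD.comp' (measurable_const.sub measurable_id')).mul
      (measurable_id'.abs.ennreal_ofReal)
  have key : ∫⁻ p : ℝ × ℝ, ENNReal.ofReal |p.1 - p.2|
        ∂((gaussianReal 0 1).prod (gaussianReal 0 1))
      = ENNReal.ofReal (2 / Real.sqrt π) := by
    rw [lintegral_prod _ hmf.ennreal_ofReal.aemeasurable]
    have hinner2 : Measurable (Function.uncurry fun x u : ℝ =>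
        gaussianPDF 0 1 (x - u) * ENNReal.ofReal |u|) :=
      (hD.comp' (measurable_fst.sub measurable_snd)).mul
        (measurable_snd.abs.ennreal_ofReal)
    have inner : ∀ x : ℝ, ∫⁻ y, ENNReal.ofReal |x - y| ∂(gaussianReal 0 1)
        = ∫⁻ u, gaussianPDF 0 1 (x - u) * ENNReal.ofReal |u| := by
      intro x
      rw [hγ, lintegral_withDensity_eq_lintegral_mul volume hD (g := fun y => ENNReal.ofReal |x - y|)
        ((measurable_const.sub measurable_id').abs.ennreal_ofReal)]
      have hPres := (Measure.measurePreserving_sub_left volume x).lintegral_comp (hmm x)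
      calc ∫⁻ y, (gaussianPDF 0 1 * fun y => ENNReal.ofReal |x - y|) y
          = ∫⁻ y, (fun u => gaussianPDF 0 1 (x - u) * ENNReal.ofReal |u|) (x - y) := by
            refine lintegral_congr fun y => ?_
            simp [sub_sub_cancel]
        _ = ∫⁻ u, gaussianPDF 0 1 (x - u) * ENNReal.ofReal |u| := hPres
    simp_rw [inner]
    rw [hγ, lintegral_withDensity_eq_lintegral_mul volume hD
      hinner2.lintegral_prod_right]
    have step2 : ∀ x : ℝ, (gaussianPDF 0 1 * fun x => ∫⁻ u,
          gaussianPDF 0 1 (x - u) * ENNReal.ofReal |u|) x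
        = ∫⁻ u, gaussianPDF 0 1 x * (gaussianPDF 0 1 (x - u) * ENNReal.ofReal |u|) := by
      intro x
      simp only [Pi.mul_apply]
      rw [← lintegral_const_mul _ (hmm x)]
    simp_rw [step2]
    rw [lintegral_lintegral_swap ((hD.comp' measurable_fst).mul
      ((hD.comp' (measurable_fst.sub measurable_snd)).mul
        (measurable_snd.abs.ennreal_ofReal))).aemeasurable]
    have step3 : ∀ u : ℝ, ∫⁻ x, gaussianPDF 0 1 x *
          (gaussianPDF 0 1 (x - u) * ENNReal.ofReal |u|)
        = ENNReal.ofReal (((2 * π)⁻¹ * Real.sqrt π)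
            * (|u| * Real.exp (-(1/4 : ℝ) * u ^ 2))) := by
      intro u
      simp_rw [← mul_assoc]
      rw [lintegral_mul_const (f := fun x => gaussianPDF 0 1 x * gaussianPDF 0 1 (x - u)) _ (hD.mul (hD.comp' (measurable_id'.sub measurable_const))),
        lintegral_gaussianPDF_mul u, ← ENNReal.ofReal_mul (by positivity)]
      congr 1
      ring
    simp_rw [step3]
    rw [← ofReal_integral_eq_lintegral_ofReal
      (integrable_abs_mul_exp_quarter.const_mul _)
      (Filter.Eventually.of_forall fun u => by positivity)]
    rw [integral_const_mul, integral_abs_mul_exp_quarter]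
    congr 1
    have hπ : Real.sqrt π * Real.sqrt π = π := Real.mul_self_sqrt pi_pos.le
    have hπ' : Real.sqrt π > 0 := Real.sqrt_pos.mpr pi_pos
    field_simp
    nlinarith [hπ]
  rw [key, ENNReal.toReal_ofReal (by positivity)]

end GMDAux

open GMDAux in
/-- For an exchangeable multivariate normal vector `Xᵢ = μ + σ(√ρ Z₀ + √(1−ρ) Zᵢ)` built from
independent standard normals `Z₀, Z₁, …, Zₙ`, the Gini mean difference is
`GMDₙ = (2/√π) σ √(1 − ρ)`. -/
theorem gmd_exchangeable_normal
    {Ω : Type*} [MeasurableSpace Ω] (P : Measure Ω) [IsProbabilityMeasure P]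
    (n : ℕ) (hn : 2 ≤ n)
    (Z : Fin (n + 1) → Ω → ℝ) (hmeas : ∀ k, Measurable (Z k))
    (hZ : ∀ k, P.map (Z k) = gaussianReal 0 1)
    (hind : iIndepFun Z P)
    (μ σ ρ : ℝ) (hσ : 0 < σ) (hρ : ρ ∈ Set.Icc (0 : ℝ) 1)
    (X : Fin n → Ω → ℝ)
    (hX : ∀ i ω, X i ω
      = μ + σ * (Real.sqrt ρ * Z 0 ω + Real.sqrt (1 - ρ) * Z i.succ ω)) :
    (1 / (n.choose 2 : ℝ)) *
        ∑ i : Fin n, ∑ j : Fin n, (if i < j then ∫ ω, |X i ω - X j ω| ∂P else 0)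
      = (2 / Real.sqrt Real.pi) * σ * Real.sqrt (1 - ρ) := by
  have hmf : Measurable fun p : ℝ × ℝ => |p.1 - p.2| := (measurable_fst.sub measurable_snd).abs
  have hpair : ∀ i j : Fin n, i ≠ j →
      ∫ ω, |X i ω - X j ω| ∂P = σ * Real.sqrt (1 - ρ) * (2 / Real.sqrt π) := by
    intro i j hij
    have hab : i.succ ≠ j.succ := fun h => hij (Fin.succ_injective _ h)
    have hZZ : ∫ ω, |Z i.succ ω - Z j.succ ω| ∂P = 2 / Real.sqrt π := by
      have hind2 : IndepFun (Z i.succ) (Z j.succ) P := hind.indepFun hab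
      have hmap : P.map (fun ω => (Z i.succ ω, Z j.succ ω))
          = (gaussianReal 0 1).prod (gaussianReal 0 1) := by
        rw [(indepFun_iff_map_prod_eq_prod_map_map (hmeas i.succ).aemeasurable
          (hmeas j.succ).aemeasurable).mp hind2, hZ, hZ]
      have := integral_map (μ := P) (((hmeas i.succ).prodMk (hmeas j.succ)).aemeasurable)
        hmf.aestronglyMeasurable
      rw [hmap] at this
      rw [← this]
      exact GMDAux.core
    have hrw : ∀ ω, |X i ω - X j ω|
        = σ * Real.sqrt (1 - ρ) * |Z i.succ ω - Z j.succ ω| := by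
      intro ω
      rw [hX, hX, show μ + σ * (Real.sqrt ρ * Z 0 ω + Real.sqrt (1 - ρ) * Z i.succ ω)
          - (μ + σ * (Real.sqrt ρ * Z 0 ω + Real.sqrt (1 - ρ) * Z j.succ ω))
          = σ * Real.sqrt (1 - ρ) * (Z i.succ ω - Z j.succ ω) by ring, abs_mul,
        abs_of_nonneg (by positivity)]
    simp_rw [hrw]
    rw [integral_const_mul, hZZ]
  set c := σ * Real.sqrt (1 - ρ) * (2 / Real.sqrt π) with hc
  have hsum : ∑ i : Fin n, ∑ j : Fin n, (if i < j then ∫ ω, |X i ω - X j ω| ∂P else 0)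
      = ∑ i : Fin n, ∑ j : Fin n, (if i < j then c else 0) := by
    refine Finset.sum_congr rfl fun i _ => Finset.sum_congr rfl fun j _ => ?_
    by_cases h : i < j
    · simp only [h, if_true, hpair i j h.ne]
    · simp [h]
  have hswap : ∑ i : Fin n, ∑ j : Fin n, (if j < i then c else 0)
      = ∑ i : Fin n, ∑ j : Fin n, (if i < j then c else 0) := by
    rw [Finset.sum_comm]
  have hdiag : ∑ i : Fin n, ∑ j : Fin n, (if i = j then c else 0) = (n : ℝ) * c := by
    simp [Finset.sum_ite_eq, Finset.card_univ]
  have htri : ∀ i j : Fin n,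
      (if i < j then c else 0) + (if j < i then c else 0) + (if i = j then c else 0) = c := by
    intro i j
    rcases lt_trichotomy i j with h | h | h
    · simp [h, asymm h, h.ne]
    · simp [h, lt_irrefl]
    · simp [h, asymm h, h.ne']
  have h0 : (∑ i : Fin n, ∑ j : Fin n, (if i < j then c else 0))
      + (∑ i : Fin n, ∑ j : Fin n, (if j < i then c else 0))
      + (∑ i : Fin n, ∑ j : Fin n, (if i = j then c else 0)) = (n : ℝ) ^ 2 * c := by
    rw [← Finset.sum_add_distrib, ← Finset.sum_add_distrib]
    simp_rw [← Finset.sum_add_distrib, htri]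
    simp [Finset.sum_const, Finset.card_univ]
    ring
  rw [hswap, hdiag] at h0
  have hS : ∑ i : Fin n, ∑ j : Fin n, (if i < j then c else 0)
      = ((n : ℝ) ^ 2 - n) / 2 * c := by linarith
  have hn' : (2 : ℝ) ≤ (n : ℝ) := by exact_mod_cast hn
  have hkey2 : (1 / ((n : ℝ) * ((n : ℝ) - 1) / 2)) * (((n : ℝ) ^ 2 - (n : ℝ)) / 2 * c) = c := by
    have h1 : (n : ℝ) ≠ 0 := by linarith
    have h2 : (n : ℝ) - 1 ≠ 0 := by intro h; nlinarith
    field_simp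
  rw [hsum, hS, Nat.cast_choose_two, hkey2, hc]
  ring
end

section
/- For all a, b ∈ ℝ, ∫_ℝ φ(x)·Φ(a + b·x) dx = Φ(a/√(1 + b²)), where φ(x) = (1/√(2π))·exp(−x²/2) is the standard normal density and Φ(t) = ∫_{−∞}^{t} φ(s) ds is the standard normal CDF. -/
open MeasureTheory Real Set

noncomputable def g : ℝ → ℝ := fun x => Real.exp (-x ^ 2 / 2)

lemma g_pos (x : ℝ) : 0 < g x := Real.exp_pos _

lemma g_eq : g = fun x => Real.exp (-(1/2 : ℝ) * x ^ 2) := by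
  ext x; simp only [g]; ring_nf

lemma g_integrable : Integrable g := by
  rw [g_eq]; exact integrable_exp_neg_mul_sq (by norm_num)

lemma g_integral : ∫ x : ℝ, g x = Real.sqrt (2 * Real.pi) := by
  rw [g_eq, integral_gaussian]
  rw [div_div_eq_mul_div, div_one, mul_comm]

lemma integral_comp_affine (F : ℝ → ℝ) {c : ℝ} (hc : 0 < c) (d : ℝ) :
    ∫ u : ℝ, F (c * u + d) = c⁻¹ * ∫ y : ℝ, F y := by
  calc ∫ u : ℝ, F (c * u + d) = ∫ u : ℝ, (fun y => F (y + d)) (c * u) := rfl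
    _ = |c⁻¹| • ∫ y : ℝ, F (y + d) :=
        Measure.integral_comp_mul_left (fun y => F (y + d)) c
    _ = c⁻¹ * ∫ y : ℝ, F y := by
        rw [integral_add_right_eq_self, abs_of_pos (inv_pos.mpr hc), smul_eq_mul]

lemma g_cont : Continuous g := by unfold g; continuity

lemma integrable_comp_affine {c : ℝ} (hc : 0 < c) (d : ℝ) :
    Integrable (fun u : ℝ => g (c * u + d)) := by
  have h1 : Integrable (fun y : ℝ => g (y + d)) := g_integrable.comp_add_right d
  have := h1.comp_mul_left' hc.ne'
  simpa using this

lemma lemA {c : ℝ} (hc : 0 < c) (t d : ℝ) :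
    ∫ s in Iic t, g s = ∫ u in Iic ((t - d) / c), c * g (c * u + d) := by
  rw [← integral_indicator measurableSet_Iic, ← integral_indicator measurableSet_Iic]
  have hpt : ∀ u : ℝ, (Iic ((t - d) / c)).indicator (fun u => c * g (c * u + d)) u
      = c * (Iic t).indicator g (c * u + d) := by
    intro u
    by_cases h : u ≤ (t - d) / c
    · have h2 : c * u + d ≤ t := by
        rw [le_div_iff₀ hc] at h; nlinarith
      simp only [Set.indicator_apply, mem_Iic, if_pos h, if_pos h2]
    · have h2 : ¬ (c * u + d ≤ t) := by
        rw [not_le] at h ⊢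
        rw [div_lt_iff₀ hc] at h; nlinarith
      simp only [Set.indicator_apply, mem_Iic, if_neg h, if_neg h2, mul_zero]
  rw [show (fun u => (Iic ((t - d) / c)).indicator (fun u => c * g (c * u + d)) u)
      = fun u => c * (Iic t).indicator g (c * u + d) from funext hpt]
  rw [integral_const_mul, integral_comp_affine ((Iic t).indicator g) hc d]
  field_simp

lemma lemB (b u : ℝ) :
    ∫ x : ℝ, g x * (Real.sqrt (1 + b ^ 2) * g (Real.sqrt (1 + b ^ 2) * u + b * x))
      = Real.sqrt (2 * Real.pi) * g u := by
  set c := Real.sqrt (1 + b ^ 2) with hcdef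
  have hc : 0 < c := Real.sqrt_pos.mpr (by positivity)
  have hc2 : c ^ 2 = 1 + b ^ 2 := Real.sq_sqrt (by positivity)
  have key : ∀ x : ℝ, g x * (c * g (c * u + b * x)) = (c * g u) * g (c * x + u * b) := by
    intro x
    have e : (-x ^ 2 / 2) + (-(c * u + b * x) ^ 2 / 2)
        = (-u ^ 2 / 2) + (-(c * x + u * b) ^ 2 / 2) := by nlinarith [hc2]
    calc g x * (c * g (c * u + b * x))
        = c * Real.exp ((-x ^ 2 / 2) + (-(c * u + b * x) ^ 2 / 2)) := by
          rw [Real.exp_add]; simp only [g]; ring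
      _ = c * Real.exp ((-u ^ 2 / 2) + (-(c * x + u * b) ^ 2 / 2)) := by rw [e]
      _ = (c * g u) * g (c * x + u * b) := by rw [Real.exp_add]; simp only [g]; ring
  simp_rw [key]
  rw [integral_const_mul, integral_comp_affine g hc (u * b), g_integral]
  field_simp

/-- `∫ φ(x) Φ(a + bx) dx = Φ(a/√(1 + b²))` for the standard normal density `φ` and CDF `Φ`. -/
theorem integral_gaussian_pdf_mul_cdf (a b : ℝ) :
    ∫ x : ℝ, (1 / Real.sqrt (2 * Real.pi) * Real.exp (-x ^ 2 / 2))
        * (∫ s in Set.Iic (a + b * x),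
            1 / Real.sqrt (2 * Real.pi) * Real.exp (-s ^ 2 / 2))
      = ∫ s in Set.Iic (a / Real.sqrt (1 + b ^ 2)),
          1 / Real.sqrt (2 * Real.pi) * Real.exp (-s ^ 2 / 2) := by
  set K := 1 / Real.sqrt (2 * Real.pi) with hKdef
  set c := Real.sqrt (1 + b ^ 2) with hcdef
  have hc : 0 < c := Real.sqrt_pos.mpr (by positivity)
  have hK : K * Real.sqrt (2 * Real.pi) = 1 := by
    rw [hKdef]
    field_simp
  show ∫ x : ℝ, (K * g x) * (∫ s in Iic (a + b * x), K * g s)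
      = ∫ s in Iic (a / c), K * g s
  have hinner : ∀ t : ℝ, (∫ s in Iic t, K * g s) = K * ∫ s in Iic t, g s :=
    fun t => integral_const_mul K g
  -- the two-variable function
  set S : Set ℝ := Iic (a / c) with hSdef
  set f : ℝ → ℝ → ℝ := fun x u => g x * (c * g (c * u + b * x)) with hfdef
  have hcont : Continuous (Function.uncurry f) :=
    (g_cont.comp continuous_fst).mul (continuous_const.mul (g_cont.comp
      ((continuous_const.mul continuous_snd).add (continuous_const.mul continuous_fst))))
  have hf_nonneg : ∀ x u, 0 ≤ f x u := fun x u => by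
    have := (g_pos x).le; have := (g_pos (c * u + b * x)).le; positivity
  have hfx_int : ∀ x : ℝ, Integrable (f x) := fun x =>
    ((integrable_comp_affine hc (b * x)).const_mul c).const_mul (g x)
  have hfx_integral : ∀ x : ℝ, ∫ u : ℝ, f x u = Real.sqrt (2 * Real.pi) * g x := by
    intro x
    rw [hfdef]
    simp only
    rw [integral_const_mul, integral_const_mul, integral_comp_affine g hc (b * x), g_integral]
    field_simp
  have hint : Integrable (Function.uncurry f) (volume.prod (volume.restrict S)) := by
    refine (integrable_prod_iff hcont.aestronglyMeasurable).mpr ⟨?_, ?_⟩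
    · exact Filter.Eventually.of_forall fun x => (hfx_int x).restrict
    · refine (Integrable.mono' (g_integrable.const_mul (Real.sqrt (2 * Real.pi)))
        (hcont.aestronglyMeasurable.norm.integral_prod_right')
        (Filter.Eventually.of_forall fun x => ?_))
      have h1 : ∀ u, ‖f x u‖ = f x u := fun u => Real.norm_of_nonneg (hf_nonneg x u)
      simp_rw [Function.uncurry_apply_pair, h1]
      have h2 : (0:ℝ) ≤ ∫ u in S, f x u :=
        integral_nonneg fun u => hf_nonneg x u
      rw [Real.norm_of_nonneg h2]
      calc ∫ u in S, f x u ≤ ∫ u : ℝ, f x u :=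
            setIntegral_le_integral (hfx_int x) (Filter.Eventually.of_forall fun u => hf_nonneg x u)
        _ = Real.sqrt (2 * Real.pi) * g x := hfx_integral x
  -- main computation
  simp_rw [hinner]
  have lhs_eq : ∫ x : ℝ, (K * g x) * (K * ∫ s in Iic (a + b * x), g s)
      = K * K * ∫ x : ℝ, g x * ∫ s in Iic (a + b * x), g s := by
    rw [← integral_const_mul]
    congr 1; ext x; ring
  have step1 : ∀ x : ℝ, (∫ s in Iic (a + b * x), g s) = ∫ u in S, c * g (c * u + b * x) := by
    intro x
    have h := lemA hc (a + b * x) (b * x)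
    rwa [show (a + b * x - b * x) / c = a / c by ring_nf] at h
  have step2 : ∀ u : ℝ, (∫ x : ℝ, f x u) = Real.sqrt (2 * Real.pi) * g u := fun u => lemB b u
  have main : ∫ x : ℝ, g x * ∫ s in Iic (a + b * x), g s
      = Real.sqrt (2 * Real.pi) * ∫ u in S, g u := by
    calc ∫ x : ℝ, g x * ∫ s in Iic (a + b * x), g s
        = ∫ x : ℝ, ∫ u in S, f x u := by
          congr 1; ext x; rw [step1 x, ← integral_const_mul]
      _ = ∫ u in S, ∫ x : ℝ, f x u := integral_integral_swap hint
      _ = ∫ u in S, Real.sqrt (2 * Real.pi) * g u := by simp_rw [step2]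
      _ = Real.sqrt (2 * Real.pi) * ∫ u in S, g u := integral_const_mul _ _
  rw [lhs_eq, main,
    show K * K * (Real.sqrt (2 * Real.pi) * ∫ u in S, g u)
      = (K * Real.sqrt (2 * Real.pi)) * (K * ∫ u in S, g u) by ring, hK, one_mul]
  exact (hinner (a / c)).symm
end

section
/- For all a, b ∈ ℝ, ∫_ℝ x·φ(x)·Φ(a + b·x) dx = (b/√(1 + b²))·φ(a/√(1 + b²)), where φ(x) = (1/√(2π))·exp(−x²/2) is the standard normal density and Φ(t) = ∫_{−∞}^{t} φ(s) ds is the standard normal CDF. -/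
open MeasureTheory Real

open Filter in
lemma phi_integrable : Integrable (fun s : ℝ =>
    1 / Real.sqrt (2 * Real.pi) * Real.exp (-s ^ 2 / 2)) := by
  have h := (integrable_exp_neg_mul_sq (by norm_num : (0:ℝ) < 1/2)).const_mul
    (1 / Real.sqrt (2 * Real.pi))
  refine h.congr ?_
  filter_upwards with s
  congr 1
  ring_nf

lemma phi_continuous : Continuous (fun s : ℝ =>
    1 / Real.sqrt (2 * Real.pi) * Real.exp (-s ^ 2 / 2)) := by
  fun_prop

lemma hasDerivAt_Phi (t : ℝ) :
    HasDerivAt (fun u : ℝ => ∫ s in Set.Iic u, 1 / Real.sqrt (2 * Real.pi) * Real.exp (-s ^ 2 / 2))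
      (1 / Real.sqrt (2 * Real.pi) * Real.exp (-t ^ 2 / 2)) t := by
  set f : ℝ → ℝ := fun s => 1 / Real.sqrt (2 * Real.pi) * Real.exp (-s ^ 2 / 2) with hf
  have key : ∀ u : ℝ, (∫ s in Set.Iic u, f s) = (∫ s in Set.Iic (0:ℝ), f s) + ∫ s in (0:ℝ)..u, f s := by
    intro u
    have h := intervalIntegral.integral_Iic_sub_Iic (f := f) (a := 0) (b := u)
      phi_integrable.integrableOn phi_integrable.integrableOn
    linarith
  have h1 : HasDerivAt (fun u : ℝ => ∫ s in (0:ℝ)..u, f s) (f t) t :=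
    intervalIntegral.integral_hasDerivAt_right (phi_integrable.intervalIntegrable)
      (phi_continuous.stronglyMeasurableAtFilter _ _) phi_continuous.continuousAt
  have h2 := (h1.const_add (∫ s in Set.Iic (0:ℝ), f s))
  refine HasDerivAt.congr_of_eventuallyEq h2 ?_
  filter_upwards with u
  exact key u

lemma gaussian_prod_core (a b : ℝ) :
    ∫ x : ℝ, Real.exp (-x ^ 2 / 2) * Real.exp (-(a + b * x) ^ 2 / 2)
      = Real.sqrt (2 * Real.pi / (1 + b ^ 2)) * Real.exp (-a ^ 2 / (2 * (1 + b ^ 2))) := by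
  have hb : (0:ℝ) < 1 + b ^ 2 := by positivity
  have hd : (0:ℝ) < (1 + b ^ 2) / 2 := by positivity
  have h1 : ∀ x : ℝ, Real.exp (-x ^ 2 / 2) * Real.exp (-(a + b * x) ^ 2 / 2)
      = Real.exp (-((1 + b ^ 2) / 2) * (x + a * b / (1 + b ^ 2)) ^ 2)
        * Real.exp (-a ^ 2 / (2 * (1 + b ^ 2))) := by
    intro x
    rw [← Real.exp_add, ← Real.exp_add]
    congr 1
    field_simp
    ring
  simp_rw [h1]
  rw [integral_mul_const,
    integral_add_right_eq_self (fun y : ℝ => Real.exp (-((1 + b ^ 2) / 2) * y ^ 2))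
      (a * b / (1 + b ^ 2)),
    integral_gaussian]
  congr 2
  field_simp

/-- `∫ x φ(x) Φ(a + bx) dx = (b/√(1 + b²)) φ(a/√(1 + b²))` for the standard normal density
`φ` and CDF `Φ`. -/
theorem integral_id_mul_gaussian_pdf_mul_cdf (a b : ℝ) :
    ∫ x : ℝ, x * (1 / Real.sqrt (2 * Real.pi) * Real.exp (-x ^ 2 / 2))
        * (∫ s in Set.Iic (a + b * x),
            1 / Real.sqrt (2 * Real.pi) * Real.exp (-s ^ 2 / 2))
      = (b / Real.sqrt (1 + b ^ 2))
          * (1 / Real.sqrt (2 * Real.pi)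
              * Real.exp (-(a / Real.sqrt (1 + b ^ 2)) ^ 2 / 2)) := by
  set c : ℝ := 1 / Real.sqrt (2 * Real.pi) with hc
  have hcpos : 0 < c := by
    rw [hc]; positivity
  set φ : ℝ → ℝ := fun x => c * Real.exp (-x ^ 2 / 2) with hφ
  set Φ : ℝ → ℝ := fun t => ∫ s in Set.Iic t, φ s with hΦ
  -- basic facts
  have hφ_int : Integrable φ := phi_integrable
  have hφ_cont : Continuous φ := phi_continuous
  have hΦ_deriv : ∀ t, HasDerivAt Φ (φ t) t := hasDerivAt_Phi
  have hΦ_cont : Continuous Φ :=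
    continuous_iff_continuousAt.2 fun t => (hΦ_deriv t).continuousAt
  have hΦ_nonneg : ∀ t, 0 ≤ Φ t := fun t =>
    setIntegral_nonneg measurableSet_Iic (fun s _ => by positivity)
  have hΦ_le : ∀ t, Φ t ≤ ∫ s, φ s := fun t =>
    setIntegral_le_integral hφ_int (Filter.Eventually.of_forall fun s => by positivity)
  set M : ℝ := ∫ s, φ s with hM
  -- functions for integration by parts
  set u : ℝ → ℝ := fun x => -φ x with hu
  set v : ℝ → ℝ := fun x => Φ (a + b * x) with hv
  set u' : ℝ → ℝ := fun x => x * φ x with hu'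
  set v' : ℝ → ℝ := fun x => b * φ (a + b * x) with hv'
  have hud : ∀ x, HasDerivAt u (u' x) x := by
    intro x
    have h1 : HasDerivAt (fun x : ℝ => -x ^ 2 / 2) (-x) x := by
      have := ((hasDerivAt_pow 2 x).neg).div_const 2
      simpa using this.congr_deriv (by push_cast; ring)
    have h2 := (h1.exp.const_mul c).neg
    refine h2.congr_deriv ?_
    simp [hu', hφ]; ring
  have hvd : ∀ x, HasDerivAt v (v' x) x := by
    intro x
    have hin : HasDerivAt (fun x : ℝ => a + b * x) b x := by
      simpa using ((hasDerivAt_id x).const_mul b).const_add a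
    have := (hΦ_deriv (a + b * x)).comp x hin
    refine this.congr_deriv ?_
    simp [hv', mul_comm]
  -- integrability
  have hu'_int : Integrable u' := by
    have h := (integrable_mul_exp_neg_mul_sq (by norm_num : (0:ℝ) < 1/2)).const_mul c
    refine h.congr ?_
    filter_upwards with x
    simp only [hu', hφ]
    rw [show -(1/2 : ℝ) * x ^ 2 = -x ^ 2 / 2 by ring]
    ring
  have hv_meas : AEStronglyMeasurable v volume :=
    (hΦ_cont.comp (by fun_prop : Continuous fun x : ℝ => a + b * x)).aestronglyMeasurable
  have hv_bdd : ∀ x, ‖v x‖ ≤ M := by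
    intro x
    rw [Real.norm_eq_abs, abs_of_nonneg (hΦ_nonneg _)]
    exact hΦ_le _
  have huv'_int : Integrable (u * v') := by
    have : Integrable (fun x => v' x * u x) := by
      have hlin : Continuous fun x : ℝ => a + b * x := by continuity
      refine (hφ_int.neg.bdd_mul (c := |b| * c) (continuous_const.mul (hφ_cont.comp hlin)).aestronglyMeasurable
        (Filter.Eventually.of_forall fun x => ?_))
      simp only [hv', hφ, norm_mul, Real.norm_eq_abs]
      have h1 : |Real.exp (-(a + b * x) ^ 2 / 2)| ≤ 1 := by
        rw [abs_of_nonneg (Real.exp_pos _).le]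
        exact Real.exp_le_one_iff.2 (by nlinarith [sq_nonneg (a + b * x)])
      calc |b| * (|c| * |Real.exp (-(a + b * x) ^ 2 / 2)|)
          ≤ |b| * (|c| * 1) := by
            gcongr
        _ = |b| * c := by rw [abs_of_pos hcpos]; ring
    refine this.congr ?_
    filter_upwards with x
    simp [Pi.mul_apply, mul_comm]
  have hu'v_int : Integrable (u' * v) := by
    have : Integrable (fun x => v x * u' x) :=
      hu'_int.bdd_mul hv_meas (Filter.Eventually.of_forall fun x => hv_bdd x)
    refine this.congr ?_
    filter_upwards with x
    simp [Pi.mul_apply, mul_comm]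
  have huv_int : Integrable (u * v) := by
    have : Integrable (fun x => v x * u x) :=
      hφ_int.neg.bdd_mul hv_meas (Filter.Eventually.of_forall fun x => hv_bdd x)
    refine this.congr ?_
    filter_upwards with x
    simp [Pi.mul_apply, mul_comm]
  -- integration by parts
  have IBP := integral_mul_deriv_eq_deriv_mul_of_integrable (fun x _ => hud x) (fun x _ => hvd x) huv'_int hu'v_int huv_int
  -- rewrite goal as ∫ u' * v
  have goal_eq : (∫ x : ℝ, x * (c * Real.exp (-x ^ 2 / 2))
        * (∫ s in Set.Iic (a + b * x), c * Real.exp (-s ^ 2 / 2)))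
      = ∫ x, u' x * v x := by
    rfl
  rw [goal_eq]
  have step1 : ∫ x, u' x * v x = b * ∫ x, φ x * φ (a + b * x) := by
    have e1 : ∫ x, u' x * v x = - ∫ x, u x * v' x := by rw [IBP, neg_neg]
    have e2 : ∀ x, u x * v' x = -(b * (φ x * φ (a + b * x))) := by
      intro x; simp only [hu, hv']; ring
    rw [e1]
    simp_rw [e2]
    rw [integral_neg, neg_neg, integral_const_mul]
  have step2 : ∫ x, φ x * φ (a + b * x)
      = (c * c) * ∫ x, Real.exp (-x ^ 2 / 2) * Real.exp (-(a + b * x) ^ 2 / 2) := by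
    rw [← integral_const_mul]
    congr 1
    funext x
    simp only [hφ]; ring
  rw [step1, step2, gaussian_prod_core a b]
  -- final algebra
  have hbpos : (0:ℝ) < 1 + b ^ 2 := by positivity
  have hS : (0:ℝ) < Real.sqrt (1 + b ^ 2) := Real.sqrt_pos.2 hbpos
  have hT : (0:ℝ) < Real.sqrt (2 * Real.pi) := Real.sqrt_pos.2 (by positivity)
  have hexp : Real.exp (-(a / Real.sqrt (1 + b ^ 2)) ^ 2 / 2)
      = Real.exp (-a ^ 2 / (2 * (1 + b ^ 2))) := by
    congr 1
    rw [div_pow, Real.sq_sqrt hbpos.le]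
    field_simp
  have hsq : Real.sqrt (2 * Real.pi / (1 + b ^ 2))
      = Real.sqrt (2 * Real.pi) / Real.sqrt (1 + b ^ 2) :=
    Real.sqrt_div (by positivity) _
  rw [hexp, hsq, hc]
  field_simp
end
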